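/- arXiv:2101.01552 — 4 statements merged into one kernel-verified Lean document; each statement's English description precedes it below -/
import Mathlib

section
/- Let Θ be a superchannel from A to B realized by pre-processing F ∈ CPTP(B0 → E A0) and post-processing E ∈ CPTP(E A1 → B1), i.e. Θ[N] = E ∘ N ∘ F for all linear maps N : B(A0) → B(A1). If F' ∈ CPTP(B0 → E' A0), E' ∈ CPTP(E' A1 → B1) give another realization of Θ with F, F' isometry channels, and dim E = rank(J^Θ_{A0B0}) and dim E' ≤ dim E, then dim E' = dim E and there exists a unitary channel U : E → E' with F' = U ∘ F and E' = E ∘ U⁻¹. -/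
open Matrix Kronecker BigOperators
open scoped ComplexOrder

noncomputable section

namespace Dyn

/-- The elementary map `E^{ijkl}(ρ) = ⟨i|ρ|j⟩ |k⟩⟨l|`. -/
def elemMap {A0 A1 : Type*} [DecidableEq A1] (i j : A0) (k l : A1) :
    Matrix A0 A0 ℂ →ₗ[ℂ] Matrix A1 A1 ℂ where
  toFun ρ := ρ i j • Matrix.single k l 1
  map_add' x y := by simp [Matrix.add_apply, add_smul]
  map_smul' c x := by simp [Matrix.smul_apply, smul_smul]

/-- The Choi matrix `J^N = Σ_{i,j} |i⟩⟨j| ⊗ N(|i⟩⟨j|)`. -/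
def choi {A0 A1 : Type*} [DecidableEq A0]
    (N : Matrix A0 A0 ℂ →ₗ[ℂ] Matrix A1 A1 ℂ) : Matrix (A0 × A1) (A0 × A1) ℂ :=
  Matrix.of fun p q => N (Matrix.single p.1 q.1 1) p.2 q.2

/-- Inner product of maps, `⟨N,M⟩ = Σ_{ij} tr[(N(|i⟩⟨j|))† M(|i⟩⟨j|)]`. -/
def mapInner {A0 A1 : Type*} [Fintype A0] [DecidableEq A0] [Fintype A1]
    (N M : Matrix A0 A0 ℂ →ₗ[ℂ] Matrix A1 A1 ℂ) : ℂ :=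
  ∑ i : A0, ∑ j : A0,
    Matrix.trace ((N (Matrix.single i j 1))ᴴ * M (Matrix.single i j 1))

/-- Tensor product of linear maps on matrix spaces. -/
def mapTensor {A0 A1 B0 B1 : Type*} [Fintype A0] [DecidableEq A0] [Fintype B0] [DecidableEq B0]
    (N : Matrix A0 A0 ℂ →ₗ[ℂ] Matrix A1 A1 ℂ) (M : Matrix B0 B0 ℂ →ₗ[ℂ] Matrix B1 B1 ℂ) :
    Matrix (A0 × B0) (A0 × B0) ℂ →ₗ[ℂ] Matrix (A1 × B1) (A1 × B1) ℂ where
  toFun ρ := ∑ i : A0, ∑ j : A0, ∑ k : B0, ∑ l : B0,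
      ρ (i, k) (j, l) • (N (Matrix.single i j 1) ⊗ₖ M (Matrix.single k l 1))
  map_add' x y := by
    simp [Matrix.add_apply, add_smul, Finset.sum_add_distrib]
  map_smul' c x := by
    simp [Matrix.smul_apply, smul_smul, Finset.smul_sum]

/-- Trace preserving map. -/
def IsTracePreserving {A0 A1 : Type*} [Fintype A0] [Fintype A1]
    (N : Matrix A0 A0 ℂ →ₗ[ℂ] Matrix A1 A1 ℂ) : Prop :=
  ∀ ρ : Matrix A0 A0 ℂ, (N ρ).trace = ρ.trace

/-- Completely positive map: `id_R ⊗ N` preserves positive semidefiniteness for every ancilla `R`. -/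
def IsCompletelyPositive {A0 A1 : Type*} [Fintype A0] [DecidableEq A0] [Fintype A1]
    (N : Matrix A0 A0 ℂ →ₗ[ℂ] Matrix A1 A1 ℂ) : Prop :=
  ∀ (R : Type) [Fintype R] [DecidableEq R], ∀ ρ : Matrix (R × A0) (R × A0) ℂ,
    ρ.PosSemidef → ((mapTensor (LinearMap.id (R := ℂ) (M := Matrix R R ℂ)) N) ρ).PosSemidef

/-- A quantum channel: a completely positive trace-preserving map. -/
def IsChannel {A0 A1 : Type*} [Fintype A0] [DecidableEq A0] [Fintype A1]
    (N : Matrix A0 A0 ℂ →ₗ[ℂ] Matrix A1 A1 ℂ) : Prop :=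
  IsCompletelyPositive N ∧ IsTracePreserving N

/-- The Choi matrix of a supermap `Θ`. -/
def superChoi {A0 A1 B0 B1 : Type*} [DecidableEq A1] [DecidableEq B0]
    (Θ : (Matrix A0 A0 ℂ →ₗ[ℂ] Matrix A1 A1 ℂ) → (Matrix B0 B0 ℂ →ₗ[ℂ] Matrix B1 B1 ℂ)) :
    Matrix ((A0 × A1) × (B0 × B1)) ((A0 × A1) × (B0 × B1)) ℂ :=
  Matrix.of fun p q => choi (Θ (elemMap p.1.1 q.1.1 p.1.2 q.1.2)) p.2 q.2

/-- Extension `1_R ⊗ Θ` of a supermap to bipartite input maps. -/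
def idSupertensor {A0 A1 B0 B1 : Type*} (R0 R1 : Type*)
    [Fintype R0] [DecidableEq R0] [Fintype R1] [DecidableEq R1]
    [Fintype A0] [DecidableEq A0] [Fintype A1] [DecidableEq A1]
    [Fintype B0] [DecidableEq B0]
    (Θ : (Matrix A0 A0 ℂ →ₗ[ℂ] Matrix A1 A1 ℂ) → (Matrix B0 B0 ℂ →ₗ[ℂ] Matrix B1 B1 ℂ))
    (𝒩 : Matrix (R0 × A0) (R0 × A0) ℂ →ₗ[ℂ] Matrix (R1 × A1) (R1 × A1) ℂ) :
    Matrix (R0 × B0) (R0 × B0) ℂ →ₗ[ℂ] Matrix (R1 × B1) (R1 × B1) ℂ :=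
  ∑ i0 : R0, ∑ j0 : R0, ∑ i1 : R1, ∑ j1 : R1,
  ∑ a0 : A0, ∑ b0 : A0, ∑ a1 : A1, ∑ b1 : A1,
    choi 𝒩 ((i0, a0), (i1, a1)) ((j0, b0), (j1, b1)) •
      mapTensor (elemMap i0 j0 i1 j1) (Θ (elemMap a0 b0 a1 b1))

/-- A superchannel: a linear supermap that is completely positive and takes
trace-preserving maps to trace-preserving maps. -/
def IsSuperchannel {A0 A1 B0 B1 : Type*}
    [Fintype A0] [DecidableEq A0] [Fintype A1] [DecidableEq A1]
    [Fintype B0] [DecidableEq B0] [Fintype B1]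
    (Θ : (Matrix A0 A0 ℂ →ₗ[ℂ] Matrix A1 A1 ℂ) → (Matrix B0 B0 ℂ →ₗ[ℂ] Matrix B1 B1 ℂ)) : Prop :=
  (∀ (c : ℂ) (N M : Matrix A0 A0 ℂ →ₗ[ℂ] Matrix A1 A1 ℂ), Θ (c • N + M) = c • Θ N + Θ M) ∧
  (∀ N, IsTracePreserving N → IsTracePreserving (Θ N)) ∧
  (∀ (R0 R1 : Type) [Fintype R0] [DecidableEq R0] [Fintype R1] [DecidableEq R1],
    ∀ 𝒩 : Matrix (R0 × A0) (R0 × A0) ℂ →ₗ[ℂ] Matrix (R1 × A1) (R1 × A1) ℂ,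
      IsCompletelyPositive 𝒩 → IsCompletelyPositive (idSupertensor R0 R1 Θ 𝒩))

/-- Partial trace over the first tensor factor. -/
def ptraceFst {R S : Type*} [Fintype R] (X : Matrix (R × S) (R × S) ℂ) : Matrix S S ℂ :=
  Matrix.of fun i j => ∑ r : R, X (r, i) (r, j)

/-- Partial trace over the second tensor factor. -/
def ptraceSnd {R S : Type*} [Fintype S] (X : Matrix (R × S) (R × S) ℂ) : Matrix R R ℂ :=
  Matrix.of fun i j => ∑ s : S, X (i, s) (j, s)

/-- Marginal `J_{A1B0}` of a superchannel Choi matrix. -/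
def margA1B0 {A0 A1 B0 B1 : Type*} [Fintype A0] [Fintype B1]
    (J : Matrix ((A0 × A1) × (B0 × B1)) ((A0 × A1) × (B0 × B1)) ℂ) :
    Matrix (A1 × B0) (A1 × B0) ℂ :=
  Matrix.of fun p q => ∑ i : A0, ∑ r : B1, J ((i, p.1), (p.2, r)) ((i, q.1), (q.2, r))

/-- Marginal `J_{AB0}` of a superchannel Choi matrix. -/
def margAB0 {A0 A1 B0 B1 : Type*} [Fintype B1]
    (J : Matrix ((A0 × A1) × (B0 × B1)) ((A0 × A1) × (B0 × B1)) ℂ) :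
    Matrix ((A0 × A1) × B0) ((A0 × A1) × B0) ℂ :=
  Matrix.of fun p q => ∑ r : B1, J (p.1, (p.2, r)) (q.1, (q.2, r))

/-- Marginal `J_{A0B0}` of a superchannel Choi matrix. -/
def margA0B0 {A0 A1 B0 B1 : Type*} [Fintype A1] [Fintype B1]
    (J : Matrix ((A0 × A1) × (B0 × B1)) ((A0 × A1) × (B0 × B1)) ℂ) :
    Matrix (A0 × B0) (A0 × B0) ℂ :=
  Matrix.of fun p q => ∑ k : A1, ∑ r : B1, J ((p.1, k), (p.2, r)) ((q.1, k), (q.2, r))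

/-- Partial trace over the `A` system of a matrix on `AB`. -/
def trA {A0 A1 B0 B1 : Type*} [Fintype A0] [Fintype A1]
    (X : Matrix ((A0 × A1) × (B0 × B1)) ((A0 × A1) × (B0 × B1)) ℂ) :
    Matrix (B0 × B1) (B0 × B1) ℂ :=
  Matrix.of fun b b' => ∑ a : A0 × A1, X (a, b) (a, b')

/-- The linear map with a prescribed Choi matrix. -/
def mapOfChoi {B0 B1 : Type*} [Fintype B0]
    (C : Matrix (B0 × B1) (B0 × B1) ℂ) : Matrix B0 B0 ℂ →ₗ[ℂ] Matrix B1 B1 ℂ where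
  toFun ρ := Matrix.of fun p q => ∑ m : B0, ∑ n : B0, C (m, p) (n, q) * ρ m n
  map_add' x y := by
    ext p q
    simp [Matrix.add_apply, mul_add, Finset.sum_add_distrib]
  map_smul' c x := by
    ext p q
    simp [Matrix.smul_apply, Finset.mul_sum, smul_eq_mul]
    ring_nf
    simp [Finset.mul_sum, mul_comm, mul_left_comm]

/-- The supermap determined by a Choi matrix on `AB`, acting on Choi matrices via
`R(J^N) = tr_A[J ((J^N)^T ⊗ I)]`. -/
def choiToSupermap {A0 A1 B0 B1 : Type*} [Fintype A0] [DecidableEq A0] [Fintype A1] [Fintype B0]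
    (J : Matrix ((A0 × A1) × (B0 × B1)) ((A0 × A1) × (B0 × B1)) ℂ) :
    (Matrix A0 A0 ℂ →ₗ[ℂ] Matrix A1 A1 ℂ) → (Matrix B0 B0 ℂ →ₗ[ℂ] Matrix B1 B1 ℂ) :=
  fun N => mapOfChoi (Matrix.of fun bp bq => ∑ x : A0 × A1, ∑ y : A0 × A1,
    J (x, bp) (y, bq) * choi N x y)

/-- Unnormalized maximally entangled state `φ+ = Σ_{ij} |ii⟩⟨jj|`. -/
def phiPlus (A : Type*) [DecidableEq A] : Matrix (A × A) (A × A) ℂ :=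
  Matrix.of fun p q => if p.1 = p.2 ∧ q.1 = q.2 then 1 else 0

/-- Conjugation channel `ρ ↦ V ρ V†`. -/
def conjMap {E E' : Type*} [Fintype E]
    (V : Matrix E' E ℂ) : Matrix E E ℂ →ₗ[ℂ] Matrix E' E' ℂ where
  toFun ρ := V * ρ * Vᴴ
  map_add' x y := by simp [Matrix.mul_add, Matrix.add_mul]
  map_smul' c x := by simp [Matrix.mul_smul, Matrix.smul_mul]

/-- Left inverse of an isometry channel: `σ ↦ V†σV + tr[(I − VV†)σ] τ`. -/
def invMap {E E' : Type*} [Fintype E] [Fintype E'] [DecidableEq E']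
    (V : Matrix E' E ℂ) (τ : Matrix E E ℂ) : Matrix E' E' ℂ →ₗ[ℂ] Matrix E E ℂ where
  toFun σ := Vᴴ * σ * V + (Matrix.trace ((1 - V * Vᴴ) * σ)) • τ
  map_add' x y := by
    simp only [Matrix.mul_add, Matrix.add_mul, Matrix.trace_add, add_smul]
    abel
  map_smul' c x := by
    simp [Matrix.mul_smul, Matrix.smul_mul, smul_add, smul_smul, smul_eq_mul]

/-- Dual cone (within Hermitian matrices) with respect to the Hilbert–Schmidt inner product. -/
def dualCone {n : Type*} [Fintype n] (K : Set (Matrix n n ℂ)) : Set (Matrix n n ℂ) :=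
  {W | W.IsHermitian ∧ ∀ M ∈ K, 0 ≤ (Matrix.trace (W * M)).re}

/-- Trace norm, characterized as `max_U Re tr[U X]` over unitaries. -/
def traceNorm {n : Type*} [Fintype n] [DecidableEq n] (X : Matrix n n ℂ) : ℝ :=
  sSup {y : ℝ | ∃ U ∈ Matrix.unitaryGroup n ℂ, y = (Matrix.trace ((U : Matrix n n ℂ) * X)).re}

/-- Diamond norm of a Hermitian-preserving map. -/
def diamondNorm {B0 B1 : Type*} [Fintype B0] [DecidableEq B0] [Fintype B1] [DecidableEq B1]
    (L : Matrix B0 B0 ℂ →ₗ[ℂ] Matrix B1 B1 ℂ) : ℝ :=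
  sSup {x : ℝ | ∃ v : B0 × B0 → ℂ, (∑ p : B0 × B0, Complex.normSq (v p)) = 1 ∧
    x = traceNorm ((mapTensor (LinearMap.id (R := ℂ) (M := Matrix B0 B0 ℂ)) L)
        (Matrix.of fun p q => v p * (starRingEnd ℂ) (v q)))}

/-- The monotone `f_P(N) = max_{Θ ∈ FREE} ⟨P, Θ[N]⟩`. -/
def fP {A0 A1 B0 B1 : Type*} [DecidableEq A1] [Fintype B0] [DecidableEq B0] [Fintype B1]
    (FREE : Set ((Matrix A0 A0 ℂ →ₗ[ℂ] Matrix A1 A1 ℂ) → (Matrix B0 B0 ℂ →ₗ[ℂ] Matrix B1 B1 ℂ)))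
    (P : Matrix B0 B0 ℂ →ₗ[ℂ] Matrix B1 B1 ℂ)
    (N : Matrix A0 A0 ℂ →ₗ[ℂ] Matrix A1 A1 ℂ) : ℝ :=
  sSup {x : ℝ | ∃ Θ ∈ FREE, x = (Matrix.trace ((choi P)ᴴ * choi (Θ N))).re}

/-- `g(P) = max_{M free} ⟨P, M⟩`. -/
def gP {B0 B1 : Type*} [Fintype B0] [DecidableEq B0] [Fintype B1]
    (FB : Set (Matrix B0 B0 ℂ →ₗ[ℂ] Matrix B1 B1 ℂ))
    (P : Matrix B0 B0 ℂ →ₗ[ℂ] Matrix B1 B1 ℂ) : ℝ :=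
  sSup {x : ℝ | ∃ C ∈ FB, x = (Matrix.trace ((choi P)ᴴ * choi C)).re}

/-- Replacement supermap: the superchannel that (on channels) replaces the input with `C`. -/
def replSupermap {A0 A1 B0 B1 : Type*} [Fintype A0] [DecidableEq A0] [Fintype A1]
    (C : Matrix B0 B0 ℂ →ₗ[ℂ] Matrix B1 B1 ℂ) :
    (Matrix A0 A0 ℂ →ₗ[ℂ] Matrix A1 A1 ℂ) → (Matrix B0 B0 ℂ →ₗ[ℂ] Matrix B1 B1 ℂ) :=
  fun N => ((Matrix.trace (choi N)) / (Fintype.card A0 : ℂ)) • C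

/-- Appending supermap `N ↦ N ⊗ C`. -/
def appendSupermap {A0 A1 B0 B1 : Type*} [Fintype A0] [DecidableEq A0] [Fintype B0] [DecidableEq B0]
    (C : Matrix B0 B0 ℂ →ₗ[ℂ] Matrix B1 B1 ℂ) :
    (Matrix A0 A0 ℂ →ₗ[ℂ] Matrix A1 A1 ℂ) →
      (Matrix (A0 × B0) (A0 × B0) ℂ →ₗ[ℂ] Matrix (A1 × B1) (A1 × B1) ℂ) :=
  fun N => mapTensor N C

end Dyn
end

noncomputable section Aux
namespace SCAux
open Matrix Kronecker Dyn

set_option linter.unusedSectionVars false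

variable {A0 A1 B0 B1 E E' : Type*}
  [Fintype A0] [DecidableEq A0] [Fintype A1] [DecidableEq A1]
  [Fintype B0] [DecidableEq B0] [Fintype B1] [DecidableEq B1]
  [Fintype E] [DecidableEq E] [Fintype E'] [DecidableEq E']

/-- rows of the isometry, arranged as an `(A0 × B0) × E` matrix. -/
def rowMat (W : Matrix (E × A0) B0 ℂ) : Matrix (A0 × B0) E ℂ :=
  Matrix.of fun p e => W (e, p.1) p.2

set_option maxHeartbeats 1000000 in
lemma key1 (W : Matrix (E × A0) B0 ℂ) (i j : A0) (k l : A1) (b b' : B0) :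
    Dyn.mapTensor (LinearMap.id (R := ℂ) (M := Matrix E E ℂ)) (Dyn.elemMap i j k l)
      (W * (Matrix.single b b' 1 : Matrix B0 B0 ℂ) * Wᴴ)
    = (Matrix.of fun e f => W (e,i) b * star (W (f,j) b'))
        ⊗ₖ (Matrix.single k l 1 : Matrix A1 A1 ℂ) := by
  ext ⟨e, k0⟩ ⟨f, l0⟩
  simp [Dyn.mapTensor, Dyn.elemMap, Matrix.mul_apply, Matrix.single,
    conjTranspose_apply, ite_and, Finset.mul_sum, kroneckerMap_apply, Matrix.sum_apply,
    Finset.sum_ite_eq, Finset.sum_ite_eq', ite_apply]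

lemma marg_eq (W : Matrix (E × A0) B0 ℂ)
    (ℰ : Matrix (E × A1) (E × A1) ℂ →ₗ[ℂ] Matrix B1 B1 ℂ)
    (hTP : Dyn.IsTracePreserving ℰ)
    (Θ : (Matrix A0 A0 ℂ →ₗ[ℂ] Matrix A1 A1 ℂ) → (Matrix B0 B0 ℂ →ₗ[ℂ] Matrix B1 B1 ℂ))
    (hreal : ∀ N, Θ N =
      ℰ ∘ₗ (Dyn.mapTensor (LinearMap.id (R := ℂ) (M := Matrix E E ℂ)) N) ∘ₗ Dyn.conjMap W) :
    Dyn.margA0B0 (Dyn.superChoi Θ)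
      = (Fintype.card A1 : ℂ) • (rowMat W * (rowMat W)ᴴ) := by
  ext ⟨i, b⟩ ⟨j, b'⟩
  simp only [Dyn.margA0B0, Dyn.superChoi, Dyn.choi, Matrix.of_apply, hreal,
    LinearMap.comp_apply]
  have hc : ∀ ρ : Matrix B0 B0 ℂ, Dyn.conjMap W ρ = W * ρ * Wᴴ := fun ρ => rfl
  simp only [hc, key1]
  have ht : ∀ (X : Matrix (E × A1) (E × A1) ℂ),
      (∑ r : B1, (ℰ X) r r) = X.trace := fun X => hTP X
  calc ∑ k : A1, ∑ r : B1,
        (ℰ ((Matrix.of fun e f => W (e,i) b * star (W (f,j) b'))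
          ⊗ₖ (Matrix.single k k 1 : Matrix A1 A1 ℂ))) (b, r).2 (b', r).2
      = ∑ k : A1, ((Matrix.of fun e f => W (e,i) b * star (W (f,j) b'))
          ⊗ₖ (Matrix.single k k 1 : Matrix A1 A1 ℂ)).trace := by
        exact Finset.sum_congr rfl fun k _ => ht _
    _ = ∑ _k : A1, (Matrix.of fun e f : E => W (e,i) b * star (W (f,j) b')).trace := by
        simp [Matrix.trace_kronecker]
    _ = (Fintype.card A1 : ℂ) * ∑ e : E, W (e,i) b * star (W (e,j) b') := by
        simp [Matrix.trace, Matrix.diag, Finset.sum_const, nsmul_eq_mul]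
    _ = ((Fintype.card A1 : ℂ) • (rowMat W * (rowMat W)ᴴ)) (i, b) (j, b') := by
        simp [Matrix.mul_apply, rowMat, Matrix.smul_apply, conjTranspose_apply]

lemma isUnit_of_rank_eq (X : Matrix E E ℂ) (h : X.rank = Fintype.card E) : IsUnit X := by
  rw [← Matrix.mulVec_injective_iff_isUnit]
  have hfr : Module.finrank ℂ (LinearMap.range X.mulVecLin) = Module.finrank ℂ (E → ℂ) := by
    rw [Module.finrank_pi]; exact h
  have hsurj : Function.Surjective X.mulVecLin := by
    rw [← LinearMap.range_eq_top]
    exact Submodule.eq_top_of_finrank_eq hfr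
  have hinj : Function.Injective X.mulVecLin :=
    (LinearMap.injective_iff_surjective).mpr hsurj
  exact hinj

/-- Construction of the connecting unitary `S` with `V * S = V'`. -/
lemma exists_S (V : Matrix (A0 × B0) E ℂ) (V' : Matrix (A0 × B0) E' ℂ)
    (hVV : V * Vᴴ = V' * V'ᴴ)
    (hrk : V.rank = Fintype.card E)
    (hEE : Fintype.card E' = Fintype.card E) :
    ∃ S : Matrix E E' ℂ, V * S = V' ∧ S * Sᴴ = 1 ∧ Sᴴ * S = 1 := by
  have hX : IsUnit (Vᴴ * V) := by
    apply isUnit_of_rank_eq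
    rw [Matrix.rank_conjTranspose_mul_self]; exact hrk
  have hrk' : V'.rank = Fintype.card E := by
    have h1 : (V' * V'ᴴ).rank = V'.rank := Matrix.rank_self_mul_conjTranspose _
    have h2 : (V * Vᴴ).rank = V.rank := Matrix.rank_self_mul_conjTranspose _
    rw [← h1, ← hVV, h2, hrk]
  have hY : IsUnit (V'ᴴ * V') := by
    apply isUnit_of_rank_eq
    rw [Matrix.rank_conjTranspose_mul_self, hrk', hEE]
  have hXdet : IsUnit (Vᴴ * V).det := (Matrix.isUnit_iff_isUnit_det _).mp hX
  have hYdet : IsUnit (V'ᴴ * V').det := (Matrix.isUnit_iff_isUnit_det _).mp hY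
  obtain ⟨S, hSdef⟩ : ∃ S : Matrix E E' ℂ, S = Vᴴ * V' * (V'ᴴ * V')⁻¹ := ⟨_, rfl⟩
  have hVS : V * S = V' := by
    rw [hSdef]
    have h1 : V * (Vᴴ * V' * (V'ᴴ * V')⁻¹) = (V * Vᴴ) * V' * (V'ᴴ * V')⁻¹ := by
      simp only [Matrix.mul_assoc]
    rw [h1, hVV]
    have h2 : V' * V'ᴴ * V' * (V'ᴴ * V')⁻¹ = V' * ((V'ᴴ * V') * (V'ᴴ * V')⁻¹) := by
      simp only [Matrix.mul_assoc]
    rw [h2, Matrix.mul_nonsing_inv _ hYdet, Matrix.mul_one]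
  have key : S * Sᴴ = 1 := by
    have h3 : V * (S * Sᴴ) * Vᴴ = V * Vᴴ := by
      calc V * (S * Sᴴ) * Vᴴ = (V * S) * (V * S)ᴴ := by
            rw [Matrix.conjTranspose_mul]
            simp only [Matrix.mul_assoc]
        _ = V' * V'ᴴ := by rw [hVS]
        _ = V * Vᴴ := hVV.symm
    have h4 : (Vᴴ * V) * (S * Sᴴ) * (Vᴴ * V) = (Vᴴ * V) * (Vᴴ * V) := by
      calc (Vᴴ * V) * (S * Sᴴ) * (Vᴴ * V) = Vᴴ * (V * (S * Sᴴ) * Vᴴ) * V := by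
            simp only [Matrix.mul_assoc]
        _ = Vᴴ * (V * Vᴴ) * V := by rw [h3]
        _ = (Vᴴ * V) * (Vᴴ * V) := by simp only [Matrix.mul_assoc]
    calc S * Sᴴ = ((Vᴴ * V)⁻¹ * (Vᴴ * V)) * (S * Sᴴ) * ((Vᴴ * V) * (Vᴴ * V)⁻¹) := by
          rw [Matrix.nonsing_inv_mul _ hXdet, Matrix.mul_nonsing_inv _ hXdet,
            Matrix.one_mul, Matrix.mul_one]
      _ = (Vᴴ * V)⁻¹ * ((Vᴴ * V) * (S * Sᴴ) * (Vᴴ * V)) * (Vᴴ * V)⁻¹ := by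
          simp only [Matrix.mul_assoc]
      _ = (Vᴴ * V)⁻¹ * ((Vᴴ * V) * (Vᴴ * V)) * (Vᴴ * V)⁻¹ := by rw [h4]
      _ = ((Vᴴ * V)⁻¹ * (Vᴴ * V)) * ((Vᴴ * V) * (Vᴴ * V)⁻¹) := by
          simp only [Matrix.mul_assoc]
      _ = 1 := by
          rw [Matrix.nonsing_inv_mul _ hXdet, Matrix.mul_nonsing_inv _ hXdet, Matrix.one_mul]
  exact ⟨S, hVS, key,
    (Matrix.mul_eq_one_comm_of_equiv (Fintype.equivOfCardEq hEE.symm)).mp key⟩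

lemma kron_conjTranspose {m n p q : Type*} (A : Matrix m n ℂ) (B : Matrix p q ℂ) :
    (A ⊗ₖ B)ᴴ = Aᴴ ⊗ₖ Bᴴ := by
  ext ⟨i1, i2⟩ ⟨j1, j2⟩
  simp [conjTranspose_apply, star_mul']

/-- generator matrices -/
def gen (V : Matrix (A0 × B0) E ℂ) (p q : A0 × B0) (k l : A1) :
    Matrix (E × A1) (E × A1) ℂ :=
  (Matrix.of fun e f => V p e * star (V q f)) ⊗ₖ (Matrix.single k l 1 : Matrix A1 A1 ℂ)

lemma decomp_scalar (V : Matrix (A0 × B0) E ℂ) (D : Matrix E E ℂ)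
    (h1 : (Vᵀ * V.map (starRingEnd ℂ)) * D = 1)
    (h2 : D * (Vᵀ * V.map (starRingEnd ℂ)) = 1)
    (T : Matrix E E ℂ) (e f : E) :
    ∑ p : A0 × B0, ∑ q : A0 × B0,
      (V.map (starRingEnd ℂ) * D * T * D * Vᵀ) p q * (V p e * star (V q f)) = T e f := by
  have halg : Vᵀ * (V.map (starRingEnd ℂ) * D * T * D * Vᵀ) * V.map (starRingEnd ℂ) = T := by
    calc Vᵀ * (V.map (starRingEnd ℂ) * D * T * D * Vᵀ) * V.map (starRingEnd ℂ)
        = ((Vᵀ * V.map (starRingEnd ℂ)) * D) * T * (D * (Vᵀ * V.map (starRingEnd ℂ))) := by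
          simp only [Matrix.mul_assoc]
      _ = T := by rw [h1, h2, Matrix.one_mul, Matrix.mul_one]
  conv_rhs => rw [← halg]
  simp only [Matrix.mul_apply, Matrix.transpose_apply, Matrix.map_apply, Finset.sum_mul,
    Finset.mul_sum]
  rw [Finset.sum_comm]
  refine Finset.sum_congr rfl fun p _ => ?_
  refine Finset.sum_congr rfl fun q _ => ?_
  refine Finset.sum_congr rfl fun _ _ => ?_
  refine Finset.sum_congr rfl fun _ _ => ?_
  refine Finset.sum_congr rfl fun _ _ => ?_
  refine Finset.sum_congr rfl fun _ _ => ?_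
  simp only [Complex.star_def]; ring

lemma decomp (V : Matrix (A0 × B0) E ℂ) (D : Matrix E E ℂ)
    (h1 : (Vᵀ * V.map (starRingEnd ℂ)) * D = 1)
    (h2 : D * (Vᵀ * V.map (starRingEnd ℂ)) = 1)
    (σ : Matrix (E × A1) (E × A1) ℂ) :
    σ = ∑ k : A1, ∑ l : A1, ∑ p : A0 × B0, ∑ q : A0 × B0,
      ((V.map (starRingEnd ℂ) * D * (Matrix.of fun e f => σ (e, k) (f, l)) * D * Vᵀ) p q)
        • gen V p q k l := by
  ext ⟨e, k0⟩ ⟨f, l0⟩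
  simp only [Matrix.sum_apply, Matrix.smul_apply, gen, kroneckerMap_apply, Matrix.of_apply,
    Matrix.single, smul_eq_mul]
  rw [Finset.sum_eq_single k0]
  rotate_left
  · intro k _ hk
    apply Finset.sum_eq_zero; intro l _
    apply Finset.sum_eq_zero; intro p _
    apply Finset.sum_eq_zero; intro q _
    simp [hk]
  · simp
  rw [Finset.sum_eq_single l0]
  rotate_left
  · intro l _ hl
    apply Finset.sum_eq_zero; intro p _
    apply Finset.sum_eq_zero; intro q _
    simp [hl]
  · simp
  simp only [Matrix.of_apply, if_pos rfl, and_self, mul_one]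
  have := decomp_scalar V D h1 h2 (Matrix.of fun e f => σ (e, k0) (f, l0)) e f
  simp only [Matrix.of_apply] at this
  calc σ (e, k0) (f, l0)
      = ∑ p : A0 × B0, ∑ q : A0 × B0,
          (V.map (starRingEnd ℂ) * D * (Matrix.of fun e f => σ (e, k0) (f, l0)) * D * Vᵀ) p q
            * (V p e * star (V q f)) := this.symm
    _ = _ := by
        refine Finset.sum_congr rfl fun p _ => Finset.sum_congr rfl fun q _ => ?_
        simp

lemma gen_conj (V : Matrix (A0 × B0) E ℂ) (V' : Matrix (A0 × B0) E' ℂ) (U : Matrix E' E ℂ)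
    (hV' : ∀ (p : A0 × B0) (e' : E'), V' p e' = ∑ e, U e' e * V p e)
    (p q : A0 × B0) (k l : A1) :
    (U ⊗ₖ (1 : Matrix A1 A1 ℂ)) * gen V p q k l * (U ⊗ₖ (1 : Matrix A1 A1 ℂ))ᴴ
      = gen V' p q k l := by
  unfold gen
  rw [kron_conjTranspose, Matrix.conjTranspose_one, ← Matrix.mul_kronecker_mul,
    ← Matrix.mul_kronecker_mul]
  have hM : U * (Matrix.of fun e f => V p e * star (V q f)) * Uᴴ
      = (Matrix.of fun e f => V' p e * star (V' q f)) := by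
    ext e1 f1
    have hL : (U * (Matrix.of fun e f => V p e * star (V q f)) * Uᴴ) e1 f1
        = ∑ f2 : E, ∑ e2 : E, U e1 e2 * (V p e2 * star (V q f2)) * star (U f1 f2) := by
      simp [Matrix.mul_apply, Matrix.conjTranspose_apply, Finset.sum_mul]
    rw [hL, Matrix.of_apply, hV', hV', star_sum, Finset.sum_mul_sum, Finset.sum_comm]
    refine Finset.sum_congr rfl fun f2 _ => Finset.sum_congr rfl fun e2 _ => ?_
    simp only [star_mul', Complex.star_def]
    ring
  rw [Matrix.one_mul, Matrix.mul_one, hM]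

lemma rank_smul_mul (c : ℂ) (hc : c ≠ 0) (V : Matrix (A0 × B0) E ℂ) :
    (c • (V * Vᴴ)).rank = V.rank := by
  have h : c • (V * Vᴴ) = (c • (1 : Matrix (A0 × B0) (A0 × B0) ℂ)) * (V * Vᴴ) := by
    rw [Matrix.smul_mul, Matrix.one_mul]
  rw [h, Matrix.rank_mul_eq_right_of_isUnit_det, Matrix.rank_self_mul_conjTranspose]
  rw [Matrix.det_smul, Matrix.det_one, mul_one]
  exact isUnit_iff_ne_zero.mpr (pow_ne_zero _ hc)

end SCAux
end Aux

/-- Uniqueness of the minimal realization of a superchannel. -/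
theorem superchannel_realization_unique {A0 A1 B0 B1 E E' : Type*}
    [Fintype A0] [DecidableEq A0] [Fintype A1] [DecidableEq A1]
    [Fintype B0] [DecidableEq B0] [Fintype B1] [DecidableEq B1]
    [Fintype E] [DecidableEq E] [Fintype E'] [DecidableEq E']
    (W : Matrix (E × A0) B0 ℂ) (hW : Wᴴ * W = 1)
    (W' : Matrix (E' × A0) B0 ℂ) (hW' : W'ᴴ * W' = 1)
    (ℰ : Matrix (E × A1) (E × A1) ℂ →ₗ[ℂ] Matrix B1 B1 ℂ) (hℰ : Dyn.IsChannel ℰ)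
    (ℰ' : Matrix (E' × A1) (E' × A1) ℂ →ₗ[ℂ] Matrix B1 B1 ℂ) (hℰ' : Dyn.IsChannel ℰ')
    (Θ : (Matrix A0 A0 ℂ →ₗ[ℂ] Matrix A1 A1 ℂ) → (Matrix B0 B0 ℂ →ₗ[ℂ] Matrix B1 B1 ℂ))
    (hreal : ∀ N, Θ N =
      ℰ ∘ₗ (Dyn.mapTensor (LinearMap.id (R := ℂ) (M := Matrix E E ℂ)) N) ∘ₗ Dyn.conjMap W)
    (hreal' : ∀ N, Θ N =
      ℰ' ∘ₗ (Dyn.mapTensor (LinearMap.id (R := ℂ) (M := Matrix E' E' ℂ)) N) ∘ₗ Dyn.conjMap W')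
    (hcard : Fintype.card E = (Dyn.margA0B0 (Dyn.superChoi Θ)).rank)
    (hle : Fintype.card E' ≤ Fintype.card E) :
    Fintype.card E' = Fintype.card E ∧
    ∃ U : Matrix E' E ℂ, Uᴴ * U = 1 ∧ U * Uᴴ = 1 ∧
      (∀ ρ : Matrix B0 B0 ℂ,
        Dyn.conjMap W' ρ =
          (U ⊗ₖ (1 : Matrix A0 A0 ℂ)) * (Dyn.conjMap W ρ) * (U ⊗ₖ (1 : Matrix A0 A0 ℂ))ᴴ) ∧
      (∀ σ : Matrix (E' × A1) (E' × A1) ℂ,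
        ℰ' σ = ℰ ((U ⊗ₖ (1 : Matrix A1 A1 ℂ))ᴴ * σ * (U ⊗ₖ (1 : Matrix A1 A1 ℂ)))) := by
  classical
  by_cases hA1 : Nonempty A1
  case neg =>
    haveI : IsEmpty A1 := not_nonempty_iff.mp hA1
    have hE0 : Fintype.card E = 0 := by
      rw [hcard]
      have hz : Dyn.margA0B0 (Dyn.superChoi Θ) = 0 := by
        ext p q
        simp [Dyn.margA0B0]
      rw [hz, Matrix.rank_zero]
    haveI : IsEmpty E := Fintype.card_eq_zero_iff.mp hE0
    have hE'0 : Fintype.card E' = 0 := Nat.le_antisymm (hE0 ▸ hle) (Nat.zero_le _)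
    haveI : IsEmpty E' := Fintype.card_eq_zero_iff.mp hE'0
    refine ⟨by rw [hE'0, hE0], 0, ?_, ?_, ?_, ?_⟩
    · ext i j; exact isEmptyElim i
    · ext i j; exact isEmptyElim i
    · intro ρ; ext i j; exact isEmptyElim i.1
    · intro σ
      have hσ : σ = 0 := by ext i j; exact isEmptyElim i.1
      have harg : (((0 : Matrix E' E ℂ) ⊗ₖ (1 : Matrix A1 A1 ℂ))ᴴ * σ
          * ((0 : Matrix E' E ℂ) ⊗ₖ (1 : Matrix A1 A1 ℂ))) = 0 := by
        ext i j; exact isEmptyElim i.1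
      rw [hσ]
      simp
  case pos =>
    set V : Matrix (A0 × B0) E ℂ := SCAux.rowMat W with hVdef
    set V' : Matrix (A0 × B0) E' ℂ := SCAux.rowMat W' with hV'def
    have hm := SCAux.marg_eq W ℰ hℰ.2 Θ hreal
    have hm' := SCAux.marg_eq W' ℰ' hℰ'.2 Θ hreal'
    have hcA1 : (Fintype.card A1 : ℂ) ≠ 0 := by
      exact_mod_cast Nat.cast_ne_zero.mpr Fintype.card_ne_zero
    have hVV : V * Vᴴ = V' * V'ᴴ :=
      smul_right_injective _ hcA1 (hm.symm.trans hm')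
    have hrkV : V.rank = Fintype.card E := by
      rw [← SCAux.rank_smul_mul (Fintype.card A1 : ℂ) hcA1 V, ← hm, ← hcard]
    have hcE' : Fintype.card E' = Fintype.card E := by
      refine le_antisymm hle ?_
      calc Fintype.card E = (Dyn.margA0B0 (Dyn.superChoi Θ)).rank := hcard
        _ = V'.rank := by rw [hm', SCAux.rank_smul_mul (Fintype.card A1 : ℂ) hcA1 V']
        _ ≤ Fintype.card E' := Matrix.rank_le_card_width V'
    obtain ⟨S, hVS, hSS, hSSc⟩ := SCAux.exists_S V V' hVV hrkV hcE'
    have hTc : Sᵀᴴ = Sᴴᵀ := by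
      ext i j; simp [Matrix.conjTranspose_apply, Matrix.transpose_apply]
    refine ⟨hcE', Sᵀ, ?_, ?_, ?_, ?_⟩
    · rw [hTc, ← Matrix.transpose_mul, hSS, Matrix.transpose_one]
    · rw [hTc, ← Matrix.transpose_mul, hSSc, Matrix.transpose_one]
    all_goals {
      have hUU' : Sᵀ * Sᵀᴴ = 1 := by
        rw [hTc, ← Matrix.transpose_mul, hSSc, Matrix.transpose_one]
      have hU'U : Sᵀᴴ * Sᵀ = 1 := by
        rw [hTc, ← Matrix.transpose_mul, hSS, Matrix.transpose_one]
      have hV'row : ∀ (p : A0 × B0) (e' : E'), V' p e' = ∑ e, Sᵀ e' e * V p e := by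
        intro p e'
        have h := congrFun (congrFun hVS p) e'
        rw [Matrix.mul_apply] at h
        rw [← h]
        exact Finset.sum_congr rfl fun e _ => mul_comm _ _
      have hKW : (Sᵀ ⊗ₖ (1 : Matrix A0 A0 ℂ)) * W = W' := by
        ext ⟨e', a⟩ b
        rw [Matrix.mul_apply, Fintype.sum_prod_type]
        have hterm : ∀ e : E, ∑ a2 : A0,
            (Sᵀ ⊗ₖ (1 : Matrix A0 A0 ℂ)) (e', a) (e, a2) * W (e, a2) b
              = Sᵀ e' e * W (e, a) b := by
          intro e
          simp [Matrix.one_apply, ite_mul, mul_ite]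
        exact (Finset.sum_congr rfl fun e _ => hterm e).trans (hV'row (a, b) e').symm
      first
      | -- conjMap goal
        (intro ρ
         show W' * ρ * W'ᴴ = _
         rw [← hKW, Matrix.conjTranspose_mul]
         show _ = _ * (W * ρ * Wᴴ) * _
         simp only [Matrix.mul_assoc])
      | -- ℰ' goal
        (intro σ
         have hLL : (Sᵀ ⊗ₖ (1 : Matrix A1 A1 ℂ)) * (Sᵀ ⊗ₖ (1 : Matrix A1 A1 ℂ))ᴴ = 1 := by
           rw [SCAux.kron_conjTranspose, Matrix.conjTranspose_one, ← Matrix.mul_kronecker_mul,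
             hUU', Matrix.one_mul, Matrix.one_kronecker_one]
         have hX : IsUnit (Vᴴ * V) := by
           apply SCAux.isUnit_of_rank_eq
           rw [Matrix.rank_conjTranspose_mul_self]; exact hrkV
         have hXbar : Vᵀ * V.map (starRingEnd ℂ) = (Vᴴ * V).map (starRingEnd ℂ) := by
           ext e f
           simp [Matrix.mul_apply, Matrix.map_apply, Matrix.conjTranspose_apply,
             Matrix.transpose_apply, map_sum]
         have hXbarU : IsUnit (Vᵀ * V.map (starRingEnd ℂ)) := by
           rw [hXbar]
           have := hX.map ((starRingEnd ℂ).mapMatrix (m := E))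
           simpa [RingHom.mapMatrix_apply] using this
         have hXbarDet : IsUnit (Vᵀ * V.map (starRingEnd ℂ)).det :=
           (Matrix.isUnit_iff_isUnit_det _).mp hXbarU
         have h1 : (Vᵀ * V.map (starRingEnd ℂ)) * (Vᵀ * V.map (starRingEnd ℂ))⁻¹ = 1 :=
           Matrix.mul_nonsing_inv _ hXbarDet
         have h2 : (Vᵀ * V.map (starRingEnd ℂ))⁻¹ * (Vᵀ * V.map (starRingEnd ℂ)) = 1 :=
           Matrix.nonsing_inv_mul _ hXbarDet
         -- generator identity
         have hgen : ∀ (p q : A0 × B0) (k l : A1),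
             ℰ (SCAux.gen V p q k l)
               = ℰ' ((Sᵀ ⊗ₖ (1 : Matrix A1 A1 ℂ)) * SCAux.gen V p q k l
                   * (Sᵀ ⊗ₖ (1 : Matrix A1 A1 ℂ))ᴴ) := by
           intro p q k l
           have e3 := SCAux.gen_conj V V' Sᵀ hV'row p q k l
           rw [e3]
           have e1 : ℰ (SCAux.gen V p q k l)
               = Θ (Dyn.elemMap p.1 q.1 k l) (Matrix.single p.2 q.2 1) := by
             rw [hreal]
             simp only [LinearMap.comp_apply]
             have hc : Dyn.conjMap W (Matrix.single p.2 q.2 1)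
                 = W * (Matrix.single p.2 q.2 1 : Matrix B0 B0 ℂ) * Wᴴ := rfl
             rw [hc, SCAux.key1]
             rfl
           have e2 : ℰ' (SCAux.gen V' p q k l)
               = Θ (Dyn.elemMap p.1 q.1 k l) (Matrix.single p.2 q.2 1) := by
             rw [hreal']
             simp only [LinearMap.comp_apply]
             have hc : Dyn.conjMap W' (Matrix.single p.2 q.2 1)
                 = W' * (Matrix.single p.2 q.2 1 : Matrix B0 B0 ℂ) * W'ᴴ := rfl
             rw [hc, SCAux.key1]
             rfl
           rw [e1, e2]
         have hall : ∀ τ : Matrix (E × A1) (E × A1) ℂ,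
             ℰ τ = ℰ' ((Sᵀ ⊗ₖ (1 : Matrix A1 A1 ℂ)) * τ * (Sᵀ ⊗ₖ (1 : Matrix A1 A1 ℂ))ᴴ) := by
           intro τ
           rw [SCAux.decomp V _ h1 h2 τ]
           simp only [Matrix.mul_sum, Matrix.sum_mul, Matrix.mul_smul, Matrix.smul_mul,
             map_sum, _root_.map_smul]
           refine Finset.sum_congr rfl fun k _ => Finset.sum_congr rfl fun l _ =>
             Finset.sum_congr rfl fun p _ => Finset.sum_congr rfl fun q _ => ?_
           rw [hgen]
         have := hall ((Sᵀ ⊗ₖ (1 : Matrix A1 A1 ℂ))ᴴ * σ * (Sᵀ ⊗ₖ (1 : Matrix A1 A1 ℂ)))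
         rw [this]
         have hmid : (Sᵀ ⊗ₖ (1 : Matrix A1 A1 ℂ)) * ((Sᵀ ⊗ₖ (1 : Matrix A1 A1 ℂ))ᴴ * σ * (Sᵀ ⊗ₖ (1 : Matrix A1 A1 ℂ))) * (Sᵀ ⊗ₖ (1 : Matrix A1 A1 ℂ))ᴴ = (Sᵀ ⊗ₖ (1 : Matrix A1 A1 ℂ)) * (Sᵀ ⊗ₖ (1 : Matrix A1 A1 ℂ))ᴴ * σ * ((Sᵀ ⊗ₖ (1 : Matrix A1 A1 ℂ)) * (Sᵀ ⊗ₖ (1 : Matrix A1 A1 ℂ))ᴴ) := by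
           simp only [Matrix.mul_assoc]
         rw [hmid, hLL, Matrix.one_mul, Matrix.mul_one])
    }
end

section
/- If Θ is a superchannel from A to B, then its Choi matrix J^Θ_{AB} is positive semidefinite and its marginals satisfy J^Θ_{A1B0} = I_{A1B0} and J^Θ_{AB0} = J^Θ_{A0B0} ⊗ u_{A1}, where u_{A1} = I_{A1}/|A1| is the maximally mixed state. -/
open Matrix Kronecker BigOperators
open scoped ComplexOrder

noncomputable section
namespace DynAux
set_option linter.unusedSectionVars false
open Dyn

variable {A0 A1 B0 B1 : Type*}
    [Fintype A0] [DecidableEq A0] [Fintype A1] [DecidableEq A1]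
    [Fintype B0] [DecidableEq B0] [Fintype B1] [DecidableEq B1]

/-- `ρ ↦ tr ρ • X`. -/
def trMap (X : Matrix A1 A1 ℂ) : Matrix A0 A0 ℂ →ₗ[ℂ] Matrix A1 A1 ℂ where
  toFun ρ := ρ.trace • X
  map_add' x y := by simp [Matrix.trace_add, add_smul]
  map_smul' c x := by simp [Matrix.trace_smul, smul_smul]

lemma trace_std (k l : A1) :
    (Matrix.single k l (1:ℂ)).trace = if k = l then 1 else 0 := by
  by_cases h : k = l
  · subst h
    simp [Matrix.trace, Matrix.diag, Matrix.single, Finset.sum_ite_eq, eq_comm]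
  · simp only [Matrix.trace, Matrix.diag, Matrix.single, Matrix.of_apply, h, if_false]
    refine Finset.sum_eq_zero fun i _ => ?_
    split_ifs with hc
    · exact absurd (hc.1.trans hc.2.symm) h
    · rfl

lemma sum_elemMap_diag (k l : A1) :
    (∑ i : A0, elemMap (A1 := A1) i i k l) = trMap (Matrix.single k l 1) := by
  apply LinearMap.ext; intro ρ
  simp [elemMap, trMap, LinearMap.sum_apply, Matrix.trace, Matrix.diag, Finset.sum_smul]

section Theta
variable (Θ : (Matrix A0 A0 ℂ →ₗ[ℂ] Matrix A1 A1 ℂ) → (Matrix B0 B0 ℂ →ₗ[ℂ] Matrix B1 B1 ℂ))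
variable (hadd : ∀ (c : ℂ) (N M : Matrix A0 A0 ℂ →ₗ[ℂ] Matrix A1 A1 ℂ),
    Θ (c • N + M) = c • Θ N + Θ M)
include hadd

lemma theta_zero : Θ 0 = 0 := by
  have h := hadd 1 0 0
  simp only [one_smul, add_zero] at h
  exact (add_eq_left.mp h.symm)

lemma theta_add (N M : Matrix A0 A0 ℂ →ₗ[ℂ] Matrix A1 A1 ℂ) : Θ (N + M) = Θ N + Θ M := by
  have h := hadd 1 N M; simpa using h

lemma theta_smul (c : ℂ) (N : Matrix A0 A0 ℂ →ₗ[ℂ] Matrix A1 A1 ℂ) : Θ (c • N) = c • Θ N := by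
  have h := hadd c N 0; simpa [theta_zero Θ hadd] using h

lemma theta_sum {ι : Type*} (s : Finset ι) (f : ι → (Matrix A0 A0 ℂ →ₗ[ℂ] Matrix A1 A1 ℂ)) :
    Θ (∑ i ∈ s, f i) = ∑ i ∈ s, Θ (f i) := by
  classical
  induction s using Finset.induction_on with
  | empty => simpa using theta_zero Θ hadd
  | insert a s h ih => rw [Finset.sum_insert h, Finset.sum_insert h,
      theta_add Θ hadd, ih]

/-- Θ maps trace-annihilating maps to trace-annihilating maps. -/
lemma theta_traceAnn
    (hTP : ∀ N, Dyn.IsTracePreserving N → Dyn.IsTracePreserving (Θ N)) (k : A1)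
    (N : Matrix A0 A0 ℂ →ₗ[ℂ] Matrix A1 A1 ℂ) (hN : ∀ ρ, (N ρ).trace = 0) :
    ∀ ρ, ((Θ N) ρ).trace = 0 := by
  intro ρ
  set T : Matrix A0 A0 ℂ →ₗ[ℂ] Matrix A1 A1 ℂ := trMap (Matrix.single k k 1) with hT
  have hTtp : Dyn.IsTracePreserving T := by
    intro σ; simp [hT, trMap, Matrix.trace_smul, trace_std]
  have h1 : Dyn.IsTracePreserving (N + T) := by
    intro σ; simp [LinearMap.add_apply, Matrix.trace_add, hN σ, hTtp σ]
  have h2 := hTP _ h1 ρ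
  rw [theta_add Θ hadd] at h2
  have h3 := hTP _ hTtp ρ
  simp only [LinearMap.add_apply, Matrix.trace_add, h3] at h2
  linear_combination h2

lemma marg2
    (hTP : ∀ N, Dyn.IsTracePreserving N → Dyn.IsTracePreserving (Θ N)) :
    Dyn.margA1B0 (Dyn.superChoi Θ) = 1 := by
  ext ⟨k, m⟩ ⟨l, n⟩
  have key : Dyn.margA1B0 (Dyn.superChoi Θ) (k,m) (l,n)
      = ((Θ (trMap (Matrix.single k l 1))) (Matrix.single m n 1)).trace := by
    rw [← sum_elemMap_diag (A0 := A0), theta_sum Θ hadd]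
    simp only [Dyn.margA1B0, Dyn.superChoi, Dyn.choi, Matrix.of_apply,
      LinearMap.sum_apply, Matrix.trace_sum, Matrix.trace, Matrix.diag, Matrix.sum_apply]
    rw [Finset.sum_comm]
  rw [key]
  by_cases h : k = l
  · subst h
    have hTtp : Dyn.IsTracePreserving (trMap (A0 := A0) (Matrix.single k k 1)) := by
      intro σ; simp [trMap, Matrix.trace_smul, trace_std]
    rw [hTP _ hTtp _, trace_std]
    simp [Matrix.one_apply, Prod.ext_iff]
  · have hz := theta_traceAnn Θ hadd hTP k (trMap (Matrix.single k l 1))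
      (fun ρ => by simp only [trMap, LinearMap.coe_mk, AddHom.coe_mk, Matrix.trace_smul,
        trace_std, h, if_false, smul_eq_mul, mul_zero])
      (Matrix.single m n 1)
    rw [hz]
    simp [Matrix.one_apply, Prod.ext_iff, h]

lemma marg3
    (hTP : ∀ N, Dyn.IsTracePreserving N → Dyn.IsTracePreserving (Θ N))
    (i j : A0) (k l : A1) (m n : B0) :
    Dyn.margAB0 (Dyn.superChoi Θ) ((i, k), m) ((j, l), n)
      = Dyn.margA0B0 (Dyn.superChoi Θ) (i, m) (j, n) *
          (if k = l then (1 : ℂ) / (Fintype.card A1 : ℂ) else 0) := by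
  have : Nonempty A1 := ⟨k⟩
  have hA1 : (Fintype.card A1 : ℂ) ≠ 0 := Nat.cast_ne_zero.mpr Fintype.card_ne_zero
  set c : ℂ := if k = l then (1 : ℂ) / (Fintype.card A1 : ℂ) else 0 with hc
  set N : Matrix A0 A0 ℂ →ₗ[ℂ] Matrix A1 A1 ℂ :=
    elemMap i j k l - c • ∑ k' : A1, elemMap i j k' k' with hNdef
  have hN : ∀ ρ, (N ρ).trace = 0 := by
    intro ρ
    simp only [hNdef, LinearMap.sub_apply, LinearMap.smul_apply, LinearMap.sum_apply,
      Matrix.trace_sub, Matrix.trace_smul, Matrix.trace_sum, elemMap, LinearMap.coe_mk,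
      AddHom.coe_mk, trace_std, smul_eq_mul]
    by_cases h : k = l
    · simp only [h, if_true, hc]
      field_simp
      rw [Finset.sum_const, Finset.card_univ, nsmul_eq_mul]; ring
    · simp [h, hc]
  have hAnn := theta_traceAnn Θ hadd hTP k N hN (Matrix.single m n 1)
  have hNrw : N = (-c) • (∑ k' : A1, elemMap i j k' k') + elemMap i j k l := by
    rw [hNdef]; module
  rw [hNrw, hadd, theta_sum Θ hadd] at hAnn
  simp only [LinearMap.add_apply, LinearMap.smul_apply, LinearMap.sum_apply,
    Matrix.trace_add, Matrix.trace_smul, Matrix.trace_sum, smul_eq_mul, neg_mul] at hAnn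
  have lhs_eq : Dyn.margAB0 (Dyn.superChoi Θ) ((i, k), m) ((j, l), n)
      = ((Θ (elemMap i j k l)) (Matrix.single m n 1)).trace := by
    simp [Dyn.margAB0, Dyn.superChoi, Dyn.choi, Matrix.trace, Matrix.diag]
  have rhs_eq : Dyn.margA0B0 (Dyn.superChoi Θ) (i, m) (j, n)
      = ∑ k' : A1, ((Θ (elemMap i j k' k')) (Matrix.single m n 1)).trace := by
    simp [Dyn.margA0B0, Dyn.superChoi, Dyn.choi, Matrix.trace, Matrix.diag]
  rw [lhs_eq, rhs_eq]
  linear_combination hAnn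

end Theta
section PSD
variable {R0 R1 : Type} [Fintype R0] [DecidableEq R0] [Fintype R1] [DecidableEq R1]

lemma sum_diag {α β : Type*} [Fintype α] [Fintype β] [DecidableEq β] (g : α → β)
    (h : β × α → ℂ) :
    (∑ p : β × α, if p.1 = g p.2 then h p else 0) = ∑ i : α, h (g i, i) := by
  rw [Fintype.sum_prod_type, Finset.sum_comm]
  simp [Finset.sum_ite_eq']

lemma sum_delta_pair2 {α β : Type*} [Fintype α] [DecidableEq α] [DecidableEq β]
    (g : α → β) (k l : β × α) :
    (∑ a : α, ∑ b : α, if k = (g a, a) ∧ l = (g b, b) then (1:ℂ) else 0)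
      = if k.1 = g k.2 ∧ l.1 = g l.2 then 1 else 0 := by
  have key : ∀ a b : α, (if k = (g a, a) ∧ l = (g b, b) then (1:ℂ) else 0)
      = (if a = k.2 then 1 else 0) * ((if b = l.2 then 1 else 0) *
        (if k.1 = g k.2 ∧ l.1 = g l.2 then 1 else 0)) := by
    intro a b
    by_cases ha : a = k.2
    · by_cases hb : b = l.2
      · subst ha; subst hb; simp [Prod.ext_iff, and_assoc, and_left_comm, and_comm]
      · rw [if_neg (fun hc => hb (congrArg Prod.snd hc.2).symm), if_pos ha, if_neg hb]
        ring
    · rw [if_neg (fun hc => ha (congrArg Prod.snd hc.1).symm), if_neg ha, zero_mul]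

  simp only [key]
  simp [Finset.sum_ite_eq', ite_mul, mul_ite, zero_mul, mul_zero, one_mul]

lemma sum_sum_ite_swap {γ δ : Type*} [Fintype γ] [Fintype δ] (P : Prop) [Decidable P]
    (Q : γ → δ → Prop) [∀ a b, Decidable (Q a b)] (f : γ → δ → ℂ) :
    (∑ a : γ, ∑ b : δ, if Q a b then if P then f a b else 0 else 0)
      = if P then ∑ a : γ, ∑ b : δ, if Q a b then f a b else 0 else 0 := by
  by_cases hP : P <;> simp [hP]

lemma collapse12 {γ δ : Type*} [Fintype γ] [DecidableEq γ] [Fintype δ] [DecidableEq δ]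
    (x : γ) (y : δ) (S : γ → δ → ℂ) :
    (∑ a : γ, ∑ b : δ, if a = x ∧ b = y then S a b else 0) = S x y := by
  rw [Finset.sum_eq_single x]
  · rw [Finset.sum_eq_single y]
    · simp
    · intro b _ hb; simp [hb]
    · simp
  · intro a _ ha; exact Finset.sum_eq_zero fun b _ => by simp [ha]
  · simp

lemma sum_diag2 {α β : Type*} [Fintype α] [Fintype β] [DecidableEq β] (g : α → β)
    (h : β × α → β × α → ℂ) :
    (∑ p : β × α, ∑ q : β × α, if p.1 = g p.2 ∧ q.1 = g q.2 then h p q else 0)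
      = ∑ i : α, ∑ j : α, h (g i, i) (g j, j) := by
  have step : ∀ p : β × α, (∑ q : β × α, if p.1 = g p.2 ∧ q.1 = g q.2 then h p q else 0)
      = if p.1 = g p.2 then ∑ j : α, h p (g j, j) else 0 := by
    intro p
    by_cases hp : p.1 = g p.2
    · simp only [hp, true_and, if_true]
      exact sum_diag g (h p)
    · simp [hp]
  rw [Finset.sum_congr rfl fun p _ => step p, sum_diag g]

lemma sum_fst_diag {R α β : Type*} [Fintype R] [DecidableEq R] [Fintype α] [Fintype β]
    [DecidableEq β] (g : α → β) (x : R) (f : R × (β × α) → ℂ) :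
    (∑ a : R × (β × α), if a.1 = x ∧ a.2.1 = g a.2.2 then f a else 0)
      = ∑ i : α, f (x, (g i, i)) := by
  rw [Fintype.sum_prod_type]
  have step : ∀ a1, (∑ p : β × α, if a1 = x ∧ p.1 = g p.2 then f (a1, p) else 0)
      = if a1 = x then ∑ i : α, f (a1, (g i, i)) else 0 := fun a1 => by
    by_cases h : a1 = x
    · simp only [h, true_and, if_true]
      exact sum_diag g _
    · simp [h]
  rw [Finset.sum_congr rfl fun a1 _ => step a1]
  simp [Finset.sum_ite_eq']

/-- Generalized maximally entangled pairing along `g`. -/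
def phiG {R S : Type*} [DecidableEq S] (g : R → S) : Matrix (R × S) (R × S) ℂ :=
  Matrix.of fun p q => if g p.1 = p.2 ∧ g q.1 = q.2 then 1 else 0

lemma phiG_posSemidef {R S : Type*} [Fintype R] [Fintype S] [DecidableEq S] (g : R → S) :
    (phiG g).PosSemidef := by
  have h : phiG g = (Matrix.of fun (_ : Unit) (p : R × S) => if g p.1 = p.2 then (1:ℂ) else 0)ᴴ
      * (Matrix.of fun (_ : Unit) (p : R × S) => if g p.1 = p.2 then (1:ℂ) else 0) := by
    ext p q
    simp only [Matrix.mul_apply, Matrix.conjTranspose_apply, Matrix.of_apply, phiG,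
      Finset.univ_unique, Finset.sum_singleton]
    split_ifs with h1 h2 h3 h4 h5 <;> simp_all
  rw [h]; exact Matrix.posSemidef_conjTranspose_mul_self _

/-- The `𝒩` channel whose Choi matrix is `φ+ ⊗ φ+` (transported along equivs). -/
def NNg (f0 : A0 ≃ R0) (f1 : A1 ≃ R1) :
    Matrix (R0 × A0) (R0 × A0) ℂ →ₗ[ℂ] Matrix (R1 × A1) (R1 × A1) ℂ where
  toFun ρ := (∑ i : A0, ∑ j : A0, ρ (f0 i, i) (f0 j, j)) •
      phiG (fun r : R1 => f1.symm r)
  map_add' x y := by simp [Matrix.add_apply, Finset.sum_add_distrib, add_smul]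
  map_smul' c x := by
    simp only [Matrix.smul_apply, smul_eq_mul, RingHom.id_apply, smul_smul, ← Finset.mul_sum]

lemma NNg_CP (f0 : A0 ≃ R0) (f1 : A1 ≃ R1) : Dyn.IsCompletelyPositive (NNg f0 f1) := by
  intro R _ _ ρ hρ
  set X : Matrix (R × (R0 × A0)) (R × (R1 × A1)) ℂ :=
    Matrix.of fun p u =>
      if p.1 = u.1 ∧ p.2.1 = f0 p.2.2 ∧ u.2.1 = f1 u.2.2 then (1:ℂ) else 0 with hX
  have key : Dyn.mapTensor (LinearMap.id (R := ℂ) (M := Matrix R R ℂ)) (NNg f0 f1) ρ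
      = Xᴴ * ρ * X := by
    ext ⟨x, u⟩ ⟨y, v⟩
    have lhs : Dyn.mapTensor (LinearMap.id (R := ℂ) (M := Matrix R R ℂ)) (NNg f0 f1) ρ
        ((x,u)) ((y,v)) =
        (if u.1 = f1 u.2 then (1:ℂ) else 0) * (if v.1 = f1 v.2 then (1:ℂ) else 0) *
          ∑ i : A0, ∑ j : A0, ρ (x, (f0 i, i)) (y, (f0 j, j)) := by
      simp only [Dyn.mapTensor, LinearMap.coe_mk, AddHom.coe_mk, Matrix.sum_apply,
        Matrix.smul_apply, Matrix.kroneckerMap_apply, LinearMap.id_coe, id_eq,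
        NNg, phiG, Matrix.of_apply, Matrix.single, smul_eq_mul,
        Equiv.symm_apply_eq]
      rw [Finset.sum_congr rfl (fun x1 _ => Finset.sum_congr rfl (fun x2 _ =>
        Finset.sum_congr rfl (fun x3 _ => Finset.sum_congr rfl (fun x4 _ => by
          rw [sum_delta_pair2 (fun a => f0 a) x3 x4]))))]
      simp only [mul_ite, ite_mul, mul_zero, zero_mul, mul_one, one_mul]
      by_cases hu : u.1 = f1 u.2
      · by_cases hv : v.1 = f1 v.2
        · simp only [hu, hv, eq_self_iff_true, and_self, if_true, one_mul]
          simp only [sum_sum_ite_swap, collapse12]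
          rw [sum_diag2]
        · simp [hu, hv]
      · simp [hu]
    have rhs : (Xᴴ * ρ * X) ((x,u)) ((y,v)) =
        (if u.1 = f1 u.2 then (1:ℂ) else 0) * (if v.1 = f1 v.2 then (1:ℂ) else 0) *
          ∑ i : A0, ∑ j : A0, ρ (x, (f0 i, i)) (y, (f0 j, j)) := by
      have hXH : Xᴴ = Matrix.of fun (u : R × R1 × A1) (p : R × R0 × A0) =>
          if p.1 = u.1 ∧ p.2.1 = f0 p.2.2 ∧ u.2.1 = f1 u.2.2 then (1:ℂ) else 0 := by
        ext a b
        simp only [Matrix.conjTranspose_apply, hX, Matrix.of_apply]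
        split_ifs <;> simp
      rw [Matrix.mul_apply]
      rw [hXH]
      simp only [Matrix.mul_apply, hXH, hX, Matrix.of_apply]
      by_cases hu : u.1 = f1 u.2
      · by_cases hv : v.1 = f1 v.2
        · simp only [hu, hv, eq_self_iff_true, and_true, if_true, one_mul]
          simp only [ite_mul, mul_ite, one_mul, zero_mul, mul_one, mul_zero]
          simp only [sum_fst_diag]
          rw [Finset.sum_comm]
        · simp [hv]
      · simp [hu]
    rw [lhs, rhs]
  rw [key]
  exact hρ.conjTranspose_mul_mul_same X

lemma mapTensor_id_phiG {Rt S T : Type*} [Fintype Rt] [DecidableEq Rt]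
    [Fintype S] [DecidableEq S] [Fintype T]
    (L : Matrix S S ℂ →ₗ[ℂ] Matrix T T ℂ) (g : Rt → S) (w w' : Rt) (u v : T) :
    (Dyn.mapTensor (LinearMap.id (R := ℂ) (M := Matrix Rt Rt ℂ)) L (phiG g)) (w, u) (w', v)
      = L (Matrix.single (g w) (g w') 1) u v := by
  simp only [Dyn.mapTensor, LinearMap.coe_mk, AddHom.coe_mk, Matrix.sum_apply,
    Matrix.smul_apply, Matrix.kroneckerMap_apply, LinearMap.id_coe, id_eq, phiG,
    Matrix.of_apply, Matrix.single, smul_eq_mul]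
  refine (Finset.sum_eq_single w (fun b _ hb => ?_) (fun h => absurd (Finset.mem_univ _) h)).trans ?_
  · simp [hb]
  refine (Finset.sum_eq_single w' (fun b _ hb => ?_) (fun h => absurd (Finset.mem_univ _) h)).trans ?_
  · simp [hb]
  refine (Finset.sum_eq_single (g w) (fun b _ hb => ?_) (fun h => absurd (Finset.mem_univ _) h)).trans ?_
  · simp [Ne.symm hb]
  refine (Finset.sum_eq_single (g w') (fun b _ hb => ?_) (fun h => absurd (Finset.mem_univ _) h)).trans ?_
  · simp [Ne.symm hb]
  simp

lemma mapTensor_apply_std {α β α' β' : Type*} [Fintype α] [DecidableEq α]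
    [Fintype β] [DecidableEq β]
    (N : Matrix α α ℂ →ₗ[ℂ] Matrix α' α' ℂ) (M : Matrix β β ℂ →ₗ[ℂ] Matrix β' β' ℂ)
    (a b : α × β) (u v : α' × β') :
    (Dyn.mapTensor N M) (Matrix.single a b 1) u v
      = N (Matrix.single a.1 b.1 1) u.1 v.1 * M (Matrix.single a.2 b.2 1) u.2 v.2 := by
  simp only [Dyn.mapTensor, LinearMap.coe_mk, AddHom.coe_mk, Matrix.sum_apply,
    Matrix.smul_apply, Matrix.kroneckerMap_apply, Matrix.of_apply, smul_eq_mul]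
  rw [show Matrix.single a b (1:ℂ) = Matrix.of fun p q => if a = p ∧ b = q then 1 else 0
    from rfl]
  simp only [Matrix.of_apply]
  refine (Finset.sum_eq_single a.1 (fun c _ hc => ?_) (fun h => absurd (Finset.mem_univ _) h)).trans ?_
  · refine Finset.sum_eq_zero fun j _ => Finset.sum_eq_zero fun k _ =>
      Finset.sum_eq_zero fun l _ => ?_
    simp [Prod.ext_iff, Ne.symm hc]
  refine (Finset.sum_eq_single b.1 (fun c _ hc => ?_) (fun h => absurd (Finset.mem_univ _) h)).trans ?_
  · refine Finset.sum_eq_zero fun k _ => Finset.sum_eq_zero fun l _ => ?_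
    simp [Prod.ext_iff, Ne.symm hc]
  refine (Finset.sum_eq_single a.2 (fun c _ hc => ?_) (fun h => absurd (Finset.mem_univ _) h)).trans ?_
  · refine Finset.sum_eq_zero fun l _ => ?_
    simp [Prod.ext_iff, Ne.symm hc]
  refine (Finset.sum_eq_single b.2 (fun c _ hc => ?_) (fun h => absurd (Finset.mem_univ _) h)).trans ?_
  · simp [Prod.ext_iff, Ne.symm hc]
  simp

lemma std_apply {α β : Type*} [DecidableEq α] [DecidableEq β] (a i : α) (b j : β) :
    Matrix.single a b (1:ℂ) i j = if a = i ∧ b = j then 1 else 0 := rfl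

lemma elemMap_apply {α α' : Type*} [DecidableEq α'] (i j : α) (k l : α')
    (ρ : Matrix α α ℂ) (p q : α') :
    elemMap i j k l ρ p q = ρ i j * (if k = p ∧ l = q then 1 else 0) := by
  simp [elemMap, Matrix.single, Matrix.smul_apply]

lemma choi_NNg (f0 : A0 ≃ R0) (f1 : A1 ≃ R1) (i0 j0 : R0) (a0 b0 : A0) (i1 j1 : R1)
    (a1 b1 : A1) :
    Dyn.choi (NNg f0 f1) ((i0, a0), (i1, a1)) ((j0, b0), (j1, b1))
      = (if i0 = f0 a0 ∧ j0 = f0 b0 then (1:ℂ) else 0) *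
        (if f1.symm i1 = a1 ∧ f1.symm j1 = b1 then (1:ℂ) else 0) := by
  simp only [Dyn.choi, NNg, phiG, Matrix.of_apply, LinearMap.coe_mk, AddHom.coe_mk,
    Matrix.smul_apply, smul_eq_mul, Matrix.single]
  rw [sum_delta_pair2 (fun a => f0 a) ((i0, a0)) ((j0, b0))]

set_option maxHeartbeats 2000000 in
lemma idSupertensor_NNg_apply (f0 : A0 ≃ R0) (f1 : A1 ≃ R1)
    (Θ : (Matrix A0 A0 ℂ →ₗ[ℂ] Matrix A1 A1 ℂ) → (Matrix B0 B0 ℂ →ₗ[ℂ] Matrix B1 B1 ℂ))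
    (x0 y0 : R0) (m0 n0 : B0) (k1 l1 : R1) (r s : B1) :
    Dyn.idSupertensor R0 R1 Θ (NNg f0 f1) (Matrix.single (x0, m0) (y0, n0) 1)
        (k1, r) (l1, s)
      = Θ (elemMap (f0.symm x0) (f0.symm y0) (f1.symm k1) (f1.symm l1))
          (Matrix.single m0 n0 1) r s := by
  simp only [Dyn.idSupertensor, LinearMap.sum_apply, LinearMap.smul_apply, Matrix.sum_apply,
    Matrix.smul_apply, smul_eq_mul, choi_NNg]
  simp only [mapTensor_apply_std]
  simp only [elemMap_apply, std_apply]
  refine (Finset.sum_eq_single x0 (fun c _ hc => ?_) (fun h => absurd (Finset.mem_univ _) h)).trans ?_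
  · refine Finset.sum_eq_zero fun _ _ => Finset.sum_eq_zero fun _ _ =>
      Finset.sum_eq_zero fun _ _ => Finset.sum_eq_zero fun _ _ =>
      Finset.sum_eq_zero fun _ _ => Finset.sum_eq_zero fun _ _ =>
      Finset.sum_eq_zero fun _ _ => ?_
    simp [Ne.symm hc]
  refine (Finset.sum_eq_single y0 (fun c _ hc => ?_) (fun h => absurd (Finset.mem_univ _) h)).trans ?_
  · refine Finset.sum_eq_zero fun _ _ => Finset.sum_eq_zero fun _ _ =>
      Finset.sum_eq_zero fun _ _ => Finset.sum_eq_zero fun _ _ =>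
      Finset.sum_eq_zero fun _ _ => Finset.sum_eq_zero fun _ _ => ?_
    simp [Ne.symm hc]
  refine (Finset.sum_eq_single k1 (fun c _ hc => ?_) (fun h => absurd (Finset.mem_univ _) h)).trans ?_
  · refine Finset.sum_eq_zero fun _ _ => Finset.sum_eq_zero fun _ _ =>
      Finset.sum_eq_zero fun _ _ => Finset.sum_eq_zero fun _ _ =>
      Finset.sum_eq_zero fun _ _ => ?_
    simp [hc]
  refine (Finset.sum_eq_single l1 (fun c _ hc => ?_) (fun h => absurd (Finset.mem_univ _) h)).trans ?_
  · refine Finset.sum_eq_zero fun _ _ => Finset.sum_eq_zero fun _ _ =>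
      Finset.sum_eq_zero fun _ _ => Finset.sum_eq_zero fun _ _ => ?_
    simp [hc]
  refine (Finset.sum_eq_single (f0.symm x0) (fun c _ hc => ?_) (fun h => absurd (Finset.mem_univ _) h)).trans ?_
  · refine Finset.sum_eq_zero fun _ _ => Finset.sum_eq_zero fun _ _ =>
      Finset.sum_eq_zero fun _ _ => ?_
    have : ¬ x0 = f0 c := fun h => hc (by rw [h]; simp)
    simp [this]
  refine (Finset.sum_eq_single (f0.symm y0) (fun c _ hc => ?_) (fun h => absurd (Finset.mem_univ _) h)).trans ?_
  · refine Finset.sum_eq_zero fun _ _ => Finset.sum_eq_zero fun _ _ => ?_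
    have : ¬ y0 = f0 c := fun h => hc (by rw [h]; simp)
    simp [this]
  refine (Finset.sum_eq_single (f1.symm k1) (fun c _ hc => ?_) (fun h => absurd (Finset.mem_univ _) h)).trans ?_
  · refine Finset.sum_eq_zero fun _ _ => ?_
    simp [Ne.symm hc]
  refine (Finset.sum_eq_single (f1.symm l1) (fun c _ hc => ?_) (fun h => absurd (Finset.mem_univ _) h)).trans ?_
  · simp [Ne.symm hc]
  simp

end PSD

end DynAux
end

/-- the Choi matrix of a superchannel is PSD and has the marginals
`J_{A1B0} = I` and `J_{AB0} = J_{A0B0} ⊗ u_{A1}`. -/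
theorem superchannel_choi_marginals {A0 A1 B0 B1 : Type*}
    [Fintype A0] [DecidableEq A0] [Fintype A1] [DecidableEq A1]
    [Fintype B0] [DecidableEq B0] [Fintype B1] [DecidableEq B1]
    (Θ : (Matrix A0 A0 ℂ →ₗ[ℂ] Matrix A1 A1 ℂ) → (Matrix B0 B0 ℂ →ₗ[ℂ] Matrix B1 B1 ℂ))
    (hΘ : Dyn.IsSuperchannel Θ) :
    (Dyn.superChoi Θ).PosSemidef ∧
    Dyn.margA1B0 (Dyn.superChoi Θ) = 1 ∧
    ∀ (i j : A0) (k l : A1) (m n : B0),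
      Dyn.margAB0 (Dyn.superChoi Θ) ((i, k), m) ((j, l), n)
        = Dyn.margA0B0 (Dyn.superChoi Θ) (i, m) (j, n) *
            (if k = l then (1 : ℂ) / (Fintype.card A1 : ℂ) else 0) := by
  obtain ⟨hadd, hTP, hCP⟩ := hΘ
  refine ⟨?_, DynAux.marg2 Θ hadd hTP, DynAux.marg3 Θ hadd hTP⟩
  classical
  set f0 : A0 ≃ Fin (Fintype.card A0) := Fintype.equivFin A0 with hf0
  set f1 : A1 ≃ Fin (Fintype.card A1) := Fintype.equivFin A1 with hf1
  set fb : B0 ≃ Fin (Fintype.card B0) := Fintype.equivFin B0 with hfb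
  set L := Dyn.idSupertensor (Fin (Fintype.card A0)) (Fin (Fintype.card A1)) Θ
    (DynAux.NNg f0 f1) with hL
  have hLCP : Dyn.IsCompletelyPositive L :=
    hCP (Fin (Fintype.card A0)) (Fin (Fintype.card A1)) (DynAux.NNg f0 f1)
      (DynAux.NNg_CP f0 f1)
  set g : (Fin (Fintype.card A0) × Fin (Fintype.card B0)) → (Fin (Fintype.card A0) × B0) :=
    fun p => (p.1, fb.symm p.2) with hg
  have hout := hLCP (Fin (Fintype.card A0) × Fin (Fintype.card B0)) (DynAux.phiG g)
    (DynAux.phiG_posSemidef g)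
  set e : ((A0 × A1) × (B0 × B1)) →
      ((Fin (Fintype.card A0) × Fin (Fintype.card B0)) × (Fin (Fintype.card A1) × B1)) :=
    fun p => ((f0 p.1.1, fb p.2.1), (f1 p.1.2, p.2.2)) with he
  have heq : Dyn.superChoi Θ = (Dyn.mapTensor (LinearMap.id (R := ℂ)
      (M := Matrix (Fin (Fintype.card A0) × Fin (Fintype.card B0))
        (Fin (Fintype.card A0) × Fin (Fintype.card B0)) ℂ)) L
      (DynAux.phiG g)).submatrix e e := by
    ext ⟨⟨i, k⟩, m, r⟩ ⟨⟨j, l⟩, n, s⟩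
    rw [Matrix.submatrix_apply, he]
    rw [DynAux.mapTensor_id_phiG]
    have hgm : g (f0 i, fb m) = (f0 i, m) := by simp [hg]
    have hgn : g (f0 j, fb n) = (f0 j, n) := by simp [hg]
    rw [hgm, hgn, hL, DynAux.idSupertensor_NNg_apply]
    simp [Dyn.superChoi, Dyn.choi]
  rw [heq]
  exact hout.submatrix e
end

section
/- For a Hermitian-preserving map P from B0 to B1 and sufficiently small ε > 0, the matrix J := (1−ε) I_{B0} ⊗ u_{B1} + ε(J^P + (I_{B0} − J^P_{B0}) ⊗ u_{B1}) is positive semidefinite and satisfies the partial-trace condition tr_{B1}[J] = I_{B0}, so J is the Choi matrix of a quantum channel; moreover for every channel M, tr[J J^M] = ε tr[J^P J^M] + c^P where c^P = (|B0| − ε tr[J^P])/|B1| depends only on P. -/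
open Matrix Kronecker BigOperators
open scoped ComplexOrder

namespace Dyn
section Aux12
set_option linter.unusedSectionVars false

variable {B0 B1 : Type*} [Fintype B0] [DecidableEq B0] [Fintype B1] [DecidableEq B1]

lemma sum4_comm {α β γ δ : Type*} [Fintype α] [Fintype β] [Fintype γ] [Fintype δ]
    (f : α → β → γ → δ → ℂ) :
    ∑ a, ∑ b, ∑ c, ∑ d, f a b c d = ∑ c, ∑ d, ∑ a, ∑ b, f a b c d := by
  trans ∑ a, ∑ c, ∑ d, ∑ b, f a b c d
  · refine Finset.sum_congr rfl fun a _ => ?_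
    trans ∑ c, ∑ b, ∑ d, f a b c d
    · exact Finset.sum_comm
    · exact Finset.sum_congr rfl fun c _ => Finset.sum_comm
  · trans ∑ c, ∑ a, ∑ d, ∑ b, f a b c d
    · exact Finset.sum_comm
    · exact Finset.sum_congr rfl fun c _ => Finset.sum_comm

lemma map_conjT (P : Matrix B0 B0 ℂ →ₗ[ℂ] Matrix B1 B1 ℂ)
    (hP : ∀ ρ : Matrix B0 B0 ℂ, ρ.IsHermitian → (P ρ).IsHermitian)
    (X : Matrix B0 B0 ℂ) : P Xᴴ = (P X)ᴴ := by
  have h1 : (X + Xᴴ).IsHermitian := by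
    simp [Matrix.IsHermitian, Matrix.conjTranspose_add, add_comm]
  have h2 : (Complex.I • (X - Xᴴ)).IsHermitian := by
    ext a b
    simp only [Matrix.conjTranspose_apply, Matrix.smul_apply, Matrix.sub_apply, smul_eq_mul,
      star_mul', Complex.star_def, map_sub, Complex.conj_conj, Complex.conj_I]
    ring
  have e1 : (P (X + Xᴴ))ᴴ = P (X + Xᴴ) := hP _ h1
  have e2 : (P (Complex.I • (X - Xᴴ)))ᴴ = P (Complex.I • (X - Xᴴ)) := hP _ h2
  have hXH : Xᴴ = ((1:ℂ)/2) • (X + Xᴴ) + (Complex.I/2) • (Complex.I • (X - Xᴴ)) := by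
    rw [smul_smul]
    have : Complex.I / 2 * Complex.I = -(1/2 : ℂ) := by
      rw [div_mul_eq_mul_div, Complex.I_mul_I]; norm_num
    rw [this]
    match_scalars <;> ring
  have hX : X = ((1:ℂ)/2) • (X + Xᴴ) + (-(Complex.I)/2) • (Complex.I • (X - Xᴴ)) := by
    rw [smul_smul]
    have : -Complex.I / 2 * Complex.I = (1/2 : ℂ) := by
      rw [div_mul_eq_mul_div, neg_mul, Complex.I_mul_I]; norm_num
    rw [this]
    match_scalars <;> ring
  have lhs : P Xᴴ = ((1:ℂ)/2) • P (X + Xᴴ) + (Complex.I/2) • P (Complex.I • (X - Xᴴ)) := by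
    conv_lhs => rw [hXH]
    rw [P.map_add, P.map_smul, P.map_smul]
  have rhs : (P X)ᴴ = ((1:ℂ)/2) • P (X + Xᴴ) + (Complex.I/2) • P (Complex.I • (X - Xᴴ)) := by
    conv_lhs => rw [hX]
    rw [P.map_add, P.map_smul, P.map_smul, Matrix.conjTranspose_add,
      Matrix.conjTranspose_smul, Matrix.conjTranspose_smul, e1, e2]
    congr 1
    · norm_num
    · congr 1
      simp [Complex.star_def, map_div₀, Complex.conj_I]
  rw [lhs, rhs]

lemma choi_isHermitian (P : Matrix B0 B0 ℂ →ₗ[ℂ] Matrix B1 B1 ℂ)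
    (hP : ∀ ρ : Matrix B0 B0 ℂ, ρ.IsHermitian → (P ρ).IsHermitian) :
    (choi P).IsHermitian := by
  ext ⟨i, p⟩ ⟨j, q⟩
  have h := map_conjT P hP (Matrix.single j i (1:ℂ))
  have hstd : (Matrix.single j i (1:ℂ))ᴴ = Matrix.single i j (1:ℂ) := by
    ext a b
    simp [Matrix.conjTranspose_apply, Matrix.single, and_comm, apply_ite]
  rw [hstd] at h
  have h2 := congrFun (congrFun h p) q
  simp only [Matrix.conjTranspose_apply] at h2 ⊢
  simp only [choi, Matrix.of_apply]
  exact h2.symm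


lemma mapOfChoi_std (C : Matrix (B0 × B1) (B0 × B1) ℂ) (k l : B0) (p q : B1) :
    mapOfChoi C (Matrix.single k l (1:ℂ)) p q = C (k, p) (l, q) := by
  simp only [mapOfChoi, LinearMap.coe_mk, AddHom.coe_mk, Matrix.of_apply]
  rw [Finset.sum_eq_single k]
  · rw [Finset.sum_eq_single l]
    · simp [Matrix.single]
    · intro n _ hn; simp [Matrix.single, hn.symm]
    · intro h; exact absurd (Finset.mem_univ l) h
  · intro m _ hm; simp [Matrix.single, hm.symm]
  · intro h; exact absurd (Finset.mem_univ k) h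

lemma choi_mapOfChoi (C : Matrix (B0 × B1) (B0 × B1) ℂ) :
    choi (mapOfChoi C) = C := by
  ext ⟨i, p⟩ ⟨j, q⟩
  simp [choi, mapOfChoi_std]

lemma ptraceSnd_choi_of_TP (M : Matrix B0 B0 ℂ →ₗ[ℂ] Matrix B1 B1 ℂ)
    (hM : IsTracePreserving M) : ptraceSnd (choi M) = 1 := by
  ext i j
  have := hM (Matrix.single i j (1:ℂ))
  simp only [ptraceSnd, choi, Matrix.of_apply]
  rw [show (∑ s : B1, M (Matrix.single i j 1) (i, s).2 (j, s).2)
      = (M (Matrix.single i j 1)).trace from rfl, this]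
  by_cases h : i = j
  · subst h; simp [Matrix.trace, Matrix.diag, Matrix.single, Matrix.one_apply]
  · simp only [Matrix.trace, Matrix.diag, Matrix.single, Matrix.one_apply, h,
      if_false, Matrix.of_apply]
    rw [Finset.sum_eq_zero]
    intro s _
    simp only [Matrix.of_apply, ite_eq_right_iff, and_imp, one_ne_zero, imp_false]
    intro hh
    exact h (hh.1.trans hh.2.symm)

lemma mapOfChoi_TP (C : Matrix (B0 × B1) (B0 × B1) ℂ) (hC : ptraceSnd C = 1) :
    IsTracePreserving (mapOfChoi C) := by
  intro ρ
  have h1 : ∀ m n : B0, (∑ p : B1, C (m, p) (n, p)) = (1 : Matrix B0 B0 ℂ) m n := by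
    intro m n
    have := congrFun (congrFun hC m) n
    simpa [ptraceSnd] using this
  simp only [mapOfChoi, LinearMap.coe_mk, AddHom.coe_mk, Matrix.trace, Matrix.diag,
    Matrix.of_apply]
  calc ∑ p : B1, ∑ m : B0, ∑ n : B0, C (m, p) (n, p) * ρ m n
      = ∑ m : B0, ∑ n : B0, (∑ p : B1, C (m, p) (n, p)) * ρ m n := by
        rw [Finset.sum_comm]
        refine Finset.sum_congr rfl fun m _ => ?_
        rw [Finset.sum_comm]
        exact Finset.sum_congr rfl fun n _ => (Finset.sum_mul _ _ _).symm
    _ = ∑ m : B0, ρ m m := by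
        simp only [h1, Matrix.one_apply, ite_mul, one_mul, zero_mul]
        simp
    _ = ρ.trace := rfl

lemma mapTensor_id_mapOfChoi_apply {R : Type} [Fintype R] [DecidableEq R]
    (C : Matrix (B0 × B1) (B0 × B1) ℂ) (ρ : Matrix (R × B0) (R × B0) ℂ)
    (r r' : R) (p q : B1) :
    (mapTensor (LinearMap.id (R := ℂ) (M := Matrix R R ℂ)) (mapOfChoi C)) ρ ((r, p)) ((r', q))
      = ∑ k : B0, ∑ l : B0, ρ (r, k) (r', l) * C (k, p) (l, q) := by
  have hstd : ∀ (i a j b : R), Matrix.single i j (1:ℂ) a b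
      = if i = a ∧ j = b then 1 else 0 := fun _ _ _ _ => rfl
  simp only [mapTensor, LinearMap.coe_mk, AddHom.coe_mk, Matrix.sum_apply, Matrix.smul_apply,
    LinearMap.id_coe, id_eq, Matrix.kroneckerMap_apply, smul_eq_mul, mapOfChoi_std]
  simp only [hstd, ite_and, mul_ite, ite_mul, one_mul, mul_one, mul_zero, zero_mul,
    Finset.sum_ite_irrel, Finset.sum_const_zero, Finset.sum_ite_eq', Finset.mem_univ, if_true]

lemma mapOfChoi_CP (C : Matrix (B0 × B1) (B0 × B1) ℂ) (hC : C.PosSemidef) :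
    IsCompletelyPositive (mapOfChoi C) := by
  intro R _ _ ρ hρ
  obtain ⟨A, hA⟩ : ∃ A : Matrix (R × B0) (R × B0) ℂ, ρ = Aᴴ * A := by
    open scoped MatrixOrder in
    obtain ⟨A, hA⟩ := CStarAlgebra.nonneg_iff_eq_star_mul_self.mp hρ.nonneg
    exact ⟨A, hA⟩
  obtain ⟨B, hB⟩ : ∃ B : Matrix (B0 × B1) (B0 × B1) ℂ, C = Bᴴ * B := by
    open scoped MatrixOrder in
    obtain ⟨B, hB⟩ := CStarAlgebra.nonneg_iff_eq_star_mul_self.mp hC.nonneg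
    exact ⟨B, hB⟩
  set D : Matrix ((R × B0) × (B0 × B1)) (R × B1) ℂ :=
    Matrix.of fun ts rq => ∑ l : B0, A ts.1 (rq.1, l) * B ts.2 (l, rq.2) with hD
  have key : (mapTensor (LinearMap.id (R := ℂ) (M := Matrix R R ℂ)) (mapOfChoi C)) ρ
      = Dᴴ * D := by
    ext ⟨r, p⟩ ⟨r', q⟩
    rw [mapTensor_id_mapOfChoi_apply]
    have e1 : ∀ k l : B0, ρ (r, k) (r', l) = ∑ t : R × B0, star (A t (r, k)) * A t (r', l) := by
      intro k l
      rw [hA]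
      simp [Matrix.mul_apply, Matrix.conjTranspose_apply]
    have e2 : ∀ k l : B0, C (k, p) (l, q) = ∑ s : B0 × B1, star (B s (k, p)) * B s (l, q) := by
      intro k l
      rw [hB]
      simp [Matrix.mul_apply, Matrix.conjTranspose_apply]
    have eD : (Dᴴ * D) (r, p) (r', q) = ∑ t : R × B0, ∑ s : B0 × B1, ∑ k : B0, ∑ l : B0,
        (star (A t (r, k)) * A t (r', l)) * (star (B s (k, p)) * B s (l, q)) := by
      rw [Matrix.mul_apply, Fintype.sum_prod_type]
      refine Finset.sum_congr rfl fun t _ => Finset.sum_congr rfl fun s _ => ?_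
      simp only [Matrix.conjTranspose_apply, hD, Matrix.of_apply, star_sum, star_mul']
      rw [Finset.sum_mul_sum]
      refine Finset.sum_congr rfl fun k _ => Finset.sum_congr rfl fun l _ => ?_
      ring
    rw [eD, ← sum4_comm (fun k l t s =>
      (star (A t (r, k)) * A t (r', l)) * (star (B s (k, p)) * B s (l, q)))]
    refine Finset.sum_congr rfl fun k _ => Finset.sum_congr rfl fun l _ => ?_
    rw [e1, e2, Finset.sum_mul_sum]
  rw [key]
  exact Matrix.posSemidef_conjTranspose_mul_self D


lemma ptraceSnd_isHermitian {X : Matrix (B0 × B1) (B0 × B1) ℂ} (hX : X.IsHermitian) :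
    (ptraceSnd X).IsHermitian := by
  ext i j
  simp only [Matrix.conjTranspose_apply, ptraceSnd, Matrix.of_apply, star_sum]
  exact Finset.sum_congr rfl fun s _ => hX.apply (i, s) (j, s)

lemma trace_ptraceSnd (X : Matrix (B0 × B1) (B0 × B1) ℂ) :
    (ptraceSnd X).trace = X.trace := by
  simp only [Matrix.trace, Matrix.diag, ptraceSnd, Matrix.of_apply]
  rw [Fintype.sum_prod_type]

lemma trace_kron_u_mul (T : Matrix B0 B0 ℂ) (C : Matrix (B0 × B1) (B0 × B1) ℂ)
    (hC : ptraceSnd C = 1) :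
    ((T ⊗ₖ ((Fintype.card B1 : ℂ)⁻¹ • (1 : Matrix B1 B1 ℂ))) * C).trace
      = (Fintype.card B1 : ℂ)⁻¹ * T.trace := by
  have h1 : ∀ k m : B0, (∑ p : B1, C (k, p) (m, p)) = (1 : Matrix B0 B0 ℂ) k m := by
    intro k m
    have := congrFun (congrFun hC k) m
    simpa [ptraceSnd] using this
  simp only [Matrix.trace, Matrix.diag, Matrix.mul_apply, Matrix.kroneckerMap_apply,
    Matrix.smul_apply, Matrix.one_apply, smul_eq_mul, Fintype.sum_prod_type,
    mul_ite, ite_mul, mul_zero, zero_mul, mul_one, Finset.sum_ite_eq, Finset.mem_univ, if_true]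
  rw [Finset.mul_sum]
  refine Finset.sum_congr rfl fun x _ => ?_
  rw [Finset.sum_comm]
  calc ∑ x2 : B0, ∑ x1 : B1, T x x2 * ((Fintype.card B1 : ℂ))⁻¹ * C (x2, x1) (x, x1)
      = ∑ x2 : B0, T x x2 * ((Fintype.card B1 : ℂ))⁻¹ * ∑ x1 : B1, C (x2, x1) (x, x1) :=
        Finset.sum_congr rfl fun x2 _ => (Finset.mul_sum _ _ _).symm
    _ = ((Fintype.card B1 : ℂ))⁻¹ * T x x := by
        simp only [h1, Matrix.one_apply, mul_ite, mul_one, mul_zero, Finset.sum_ite_eq',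
          Finset.mem_univ, if_true]
        ring

lemma one_kron_u :
    ((1 : Matrix B0 B0 ℂ) ⊗ₖ ((Fintype.card B1 : ℂ)⁻¹ • (1 : Matrix B1 B1 ℂ)))
      = (Fintype.card B1 : ℂ)⁻¹ • (1 : Matrix (B0 × B1) (B0 × B1) ℂ) := by
  ext ⟨i, p⟩ ⟨j, q⟩
  simp only [Matrix.kroneckerMap_apply, Matrix.smul_apply, Matrix.one_apply, smul_eq_mul,
    Prod.mk.injEq]
  by_cases h1 : i = j <;> by_cases h2 : p = q <;> simp [h1, h2]


lemma sub_kron (X Y : Matrix B0 B0 ℂ) (U : Matrix B1 B1 ℂ) :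
    (X - Y) ⊗ₖ U = X ⊗ₖ U - Y ⊗ₖ U := by
  ext ⟨i, p⟩ ⟨j, q⟩
  simp [Matrix.kroneckerMap_apply, Matrix.sub_apply, sub_mul]

lemma ptraceSnd_kron_u [Nonempty B1] (T : Matrix B0 B0 ℂ) :
    ptraceSnd (T ⊗ₖ ((Fintype.card B1 : ℂ)⁻¹ • (1 : Matrix B1 B1 ℂ))) = T := by
  have hnC : (Fintype.card B1 : ℂ) ≠ 0 := by
    exact_mod_cast Fintype.card_ne_zero
  ext i j
  simp only [ptraceSnd, Matrix.of_apply, Matrix.kroneckerMap_apply, Matrix.smul_apply,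
    Matrix.one_apply, if_true, smul_eq_mul, mul_one, Finset.sum_const, nsmul_eq_mul]
  field_simp
  rw [Finset.card_univ, mul_comm]

lemma kron_u_isHermitian {T : Matrix B0 B0 ℂ} (hT : T.IsHermitian) :
    (T ⊗ₖ ((Fintype.card B1 : ℂ)⁻¹ • (1 : Matrix B1 B1 ℂ))).IsHermitian := by
  ext ⟨i, p⟩ ⟨j, q⟩
  simp only [Matrix.conjTranspose_apply, Matrix.kroneckerMap_apply, Matrix.smul_apply,
    Matrix.one_apply, smul_eq_mul]
  by_cases h : p = q
  · rw [if_pos h.symm, if_pos h]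
    simp only [mul_one]
    rw [star_mul', star_inv₀, star_natCast, hT.apply i j]
  · rw [if_neg (fun hh : q = p => h hh.symm), if_neg h]
    simp only [mul_zero]
    exact star_zero _

lemma inv_card_smul_one_isHermitian {m : Type*} [Fintype m] [DecidableEq m] (k : ℕ) :
    (((k : ℂ))⁻¹ • (1 : Matrix m m ℂ)).IsHermitian := by
  ext a b
  simp only [Matrix.conjTranspose_apply, Matrix.smul_apply, Matrix.one_apply, smul_eq_mul]
  by_cases h : a = b
  · rw [if_pos h.symm, if_pos h]
    simp only [mul_one]
    rw [star_inv₀, star_natCast]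
  · rw [if_neg (fun hh : b = a => h hh.symm), if_neg h]
    simp only [mul_zero]
    exact star_zero _

end Aux12
end Dyn
/-- for small `ε > 0`, `J = (1−ε) I ⊗ u + ε(J^P + (I − J^P_{B0}) ⊗ u)` is the
Choi matrix of a channel, and `tr[J J^M] = ε tr[J^P J^M] + c^P` for every channel `M`. -/
theorem perturbed_choi_channel {B0 B1 : Type*}
    [Fintype B0] [DecidableEq B0] [Fintype B1] [DecidableEq B1] [Nonempty B1]
    (P : Matrix B0 B0 ℂ →ₗ[ℂ] Matrix B1 B1 ℂ)
    (hP : ∀ ρ : Matrix B0 B0 ℂ, ρ.IsHermitian → (P ρ).IsHermitian) :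
    ∃ ε0 : ℝ, 0 < ε0 ∧ ∀ ε : ℝ, 0 < ε → ε ≤ ε0 →
      let u : Matrix B1 B1 ℂ := ((Fintype.card B1 : ℂ))⁻¹ • 1
      let J : Matrix (B0 × B1) (B0 × B1) ℂ :=
        (((1 - ε : ℝ) : ℂ)) • ((1 : Matrix B0 B0 ℂ) ⊗ₖ u) +
          ((ε : ℝ) : ℂ) • (Dyn.choi P +
            ((1 : Matrix B0 B0 ℂ) - Dyn.ptraceSnd (Dyn.choi P)) ⊗ₖ u)
      J.PosSemidef ∧
      Dyn.ptraceSnd J = 1 ∧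
      (∃ Q : Matrix B0 B0 ℂ →ₗ[ℂ] Matrix B1 B1 ℂ, Dyn.IsChannel Q ∧ Dyn.choi Q = J) ∧
      ∀ M : Matrix B0 B0 ℂ →ₗ[ℂ] Matrix B1 B1 ℂ, Dyn.IsChannel M →
        Matrix.trace (J * Dyn.choi M)
          = ((ε : ℝ) : ℂ) * Matrix.trace (Dyn.choi P * Dyn.choi M) +
            ((Fintype.card B0 : ℂ) - ((ε : ℝ) : ℂ) * Matrix.trace (Dyn.choi P)) /
              (Fintype.card B1 : ℂ) := by
  classical
  have hn : (0:ℝ) < (Fintype.card B1 : ℝ) := by exact_mod_cast Fintype.card_pos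
  have hnC : (Fintype.card B1 : ℂ) ≠ 0 := by exact_mod_cast Fintype.card_ne_zero
  set u0 : Matrix B1 B1 ℂ := ((Fintype.card B1 : ℂ))⁻¹ • 1 with hu0
  set T : Matrix B0 B0 ℂ := Dyn.ptraceSnd (Dyn.choi P) with hTdef
  set H : Matrix (B0 × B1) (B0 × B1) ℂ := Dyn.choi P - T ⊗ₖ u0 with hHdef
  set Cb : ℝ := ∑ p : B0 × B1, ∑ q : B0 × B1, ‖H p q‖ with hCbdef
  have hCb0 : 0 ≤ Cb :=
    Finset.sum_nonneg fun p _ => Finset.sum_nonneg fun q _ => norm_nonneg _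
  have hchoiH : (Dyn.choi P).IsHermitian := Dyn.choi_isHermitian P hP
  have hTH : T.IsHermitian := Dyn.ptraceSnd_isHermitian hchoiH
  have hHH : H.IsHermitian := hchoiH.sub (Dyn.kron_u_isHermitian hTH)
  refine ⟨(Fintype.card B1 : ℝ)⁻¹ / (Cb + 1), by positivity, ?_⟩
  intro ε hε hεle
  intro u J
  have hu : u = u0 := rfl
  have hJ : J = ((Fintype.card B1 : ℂ))⁻¹ • (1 : Matrix (B0 × B1) (B0 × B1) ℂ)
      + ((ε : ℝ) : ℂ) • H := by
    show (((1 - ε : ℝ) : ℂ)) • ((1 : Matrix B0 B0 ℂ) ⊗ₖ u)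
        + ((ε : ℝ) : ℂ) • (Dyn.choi P + ((1 : Matrix B0 B0 ℂ) - T) ⊗ₖ u) = _
    rw [hu, Dyn.sub_kron, Dyn.one_kron_u, hHdef]
    push_cast
    module
  have hJH : J.IsHermitian := by
    rw [hJ]
    refine Matrix.IsHermitian.add (Dyn.inv_card_smul_one_isHermitian _) ?_
    ext a b
    simp only [Matrix.conjTranspose_apply, Matrix.smul_apply, smul_eq_mul, star_mul']
    rw [hHH.apply a b]
    have : star (((ε : ℝ) : ℂ)) = ((ε : ℝ) : ℂ) := by
      simp [Complex.star_def, Complex.conj_ofReal]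
    rw [this]
  have hPSD : J.PosSemidef := by
    refine Matrix.PosSemidef.of_dotProduct_mulVec_nonneg hJH fun x => ?_
    set S : ℝ := ∑ p : B0 × B1, Complex.normSq (x p) with hSdef
    have hS0 : 0 ≤ S := Finset.sum_nonneg fun p _ => Complex.normSq_nonneg _
    have hxb : ∀ p : B0 × B1, ‖x p‖ ≤ Real.sqrt S := by
      intro p
      rw [Complex.norm_def]
      exact Real.sqrt_le_sqrt (Finset.single_le_sum
        (fun r _ => Complex.normSq_nonneg (x r)) (Finset.mem_univ p))
    set q : ℂ := dotProduct (star x) (H *ᵥ x) with hqdef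
    have hq_expand : q = ∑ a : B0 × B1, ∑ b : B0 × B1, star (x a) * H a b * x b := by
      rw [hqdef]
      simp only [dotProduct, Matrix.mulVec, dotProduct, Pi.star_apply,
        Finset.mul_sum]
      exact Finset.sum_congr rfl fun a _ => Finset.sum_congr rfl fun b _ => by ring
    have hqreal : star q = q := by
      conv_lhs => rw [hq_expand]
      calc star (∑ a : B0 × B1, ∑ b : B0 × B1, star (x a) * H a b * x b)
          = ∑ a : B0 × B1, ∑ b : B0 × B1, star (x b) * H b a * x a := by
            simp only [star_sum]
            refine Finset.sum_congr rfl fun a _ => Finset.sum_congr rfl fun b _ => ?_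
            calc star (star (x a) * H a b * x b)
                = star (x b) * star (H a b) * x a := by
                  simp only [star_mul', star_star]; ring
              _ = star (x b) * H b a * x a := by rw [hHH.apply b a]
        _ = q := by rw [hq_expand]; exact Finset.sum_comm
    have hqabs : ‖q‖ ≤ Cb * S := by
      rw [hq_expand]
      calc ‖∑ a : B0 × B1, ∑ b : B0 × B1, star (x a) * H a b * x b‖
          ≤ ∑ a : B0 × B1, ‖∑ b : B0 × B1, star (x a) * H a b * x b‖ :=
            norm_sum_le _ _
        _ ≤ ∑ a : B0 × B1, ∑ b : B0 × B1, ‖star (x a) * H a b * x b‖ :=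
            Finset.sum_le_sum fun a _ => norm_sum_le _ _
        _ ≤ ∑ a : B0 × B1, ∑ b : B0 × B1, ‖H a b‖ * S := by
            refine Finset.sum_le_sum fun a _ => Finset.sum_le_sum fun b _ => ?_
            rw [norm_mul, norm_mul]
            rw [show ‖star (x a)‖ = ‖x a‖ from
              norm_star _]
            calc ‖x a‖ * ‖H a b‖ * ‖x b‖
                = ‖H a b‖ * (‖x a‖ * ‖x b‖) := by ring
              _ ≤ ‖H a b‖ * S := by
                  refine mul_le_mul_of_nonneg_left ?_ (norm_nonneg _)
                  calc ‖x a‖ * ‖x b‖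
                      ≤ Real.sqrt S * Real.sqrt S :=
                        mul_le_mul (hxb a) (hxb b) (norm_nonneg _)
                          (Real.sqrt_nonneg _)
                    _ = S := Real.mul_self_sqrt hS0
        _ = Cb * S := by
            rw [hCbdef, Finset.sum_mul]
            exact Finset.sum_congr rfl fun a _ => (Finset.sum_mul _ _ _).symm
    have hxx : dotProduct (star x) x = ((S : ℝ) : ℂ) := by
      rw [hSdef]
      push_cast
      refine Finset.sum_congr rfl fun p _ => ?_
      simp [Pi.star_apply, Complex.star_def, Complex.normSq_eq_conj_mul_self]
    have hval : dotProduct (star x) (J *ᵥ x)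
        = ((Fintype.card B1 : ℂ))⁻¹ * ((S : ℝ) : ℂ) + ((ε : ℝ) : ℂ) * q := by
      rw [hJ, Matrix.add_mulVec, dotProduct_add, Matrix.smul_mulVec,
        Matrix.smul_mulVec, Matrix.one_mulVec, dotProduct_smul,
        dotProduct_smul, hxx, smul_eq_mul, smul_eq_mul, hqdef]
    rw [hval]
    have him : q.im = 0 := by
      have h := congrArg Complex.im hqreal
      simp only [Complex.star_def, Complex.conj_im] at h
      linarith
    have hqre : q = ((q.re : ℝ) : ℂ) := by
      refine Complex.ext ?_ ?_ <;> simp [him]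
    rw [hqre]
    rw [show ((Fintype.card B1 : ℂ))⁻¹ * ((S : ℝ) : ℂ) + ((ε : ℝ) : ℂ) * ((q.re : ℝ) : ℂ)
        = (((Fintype.card B1 : ℝ)⁻¹ * S + ε * q.re : ℝ) : ℂ) by push_cast; ring]
    rw [Complex.zero_le_real]
    have hqre_abs : |q.re| ≤ Cb * S := le_trans (Complex.abs_re_le_norm q) hqabs
    have h1 : ε * (Cb * S) ≤ (Fintype.card B1 : ℝ)⁻¹ * S := by
      rw [show ε * (Cb * S) = (ε * Cb) * S by ring]
      refine mul_le_mul_of_nonneg_right ?_ hS0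
      calc ε * Cb ≤ ((Fintype.card B1 : ℝ)⁻¹ / (Cb + 1)) * Cb :=
            mul_le_mul_of_nonneg_right hεle hCb0
        _ ≤ (Fintype.card B1 : ℝ)⁻¹ := by
            rw [div_mul_eq_mul_div, div_le_iff₀ (by linarith)]
            have hpos : (0:ℝ) ≤ (Fintype.card B1 : ℝ)⁻¹ := by positivity
            nlinarith
    have h2 : -(ε * (Cb * S)) ≤ ε * q.re := by
      have h3 : -(Cb * S) ≤ q.re := by
        have := abs_le.mp hqre_abs
        linarith [this.1]
      nlinarith
    linarith
  have hptr : Dyn.ptraceSnd J = 1 := by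
    have hH0 : Dyn.ptraceSnd (T ⊗ₖ u0) = T := Dyn.ptraceSnd_kron_u T
    ext i j
    have expand : Dyn.ptraceSnd J i j
        = ∑ s : B1, (((Fintype.card B1 : ℂ))⁻¹
              * (1 : Matrix (B0 × B1) (B0 × B1) ℂ) (i,s) (j,s)
            + ((ε : ℝ) : ℂ) * ((Dyn.choi P) (i,s) (j,s) - (T ⊗ₖ u0) (i,s) (j,s))) := by
      rw [show Dyn.ptraceSnd J i j = ∑ s : B1, J (i,s) (j,s) from rfl]
      refine Finset.sum_congr rfl fun s _ => ?_
      rw [hJ]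
      simp [hHdef, Matrix.add_apply, Matrix.smul_apply, Matrix.sub_apply]
    rw [expand, Finset.sum_add_distrib]
    have e1 : (∑ s : B1, ((Fintype.card B1 : ℂ))⁻¹
        * (1 : Matrix (B0 × B1) (B0 × B1) ℂ) (i,s) (j,s)) = (1 : Matrix B0 B0 ℂ) i j := by
      simp only [Matrix.one_apply, Prod.mk.injEq]
      by_cases h : i = j
      · simp only [h, true_and, and_self, if_true, eq_self_iff_true, mul_one,
          Finset.sum_const, nsmul_eq_mul]
        field_simp
        rw [Finset.card_univ]
      · simp [h]
    have e2 : (∑ s : B1, ((Dyn.choi P) (i,s) (j,s) - (T ⊗ₖ u0) (i,s) (j,s))) = 0 := by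
      rw [Finset.sum_sub_distrib]
      have c1 : (∑ s : B1, (Dyn.choi P) (i,s) (j,s)) = T i j := rfl
      have c2 : (∑ s : B1, (T ⊗ₖ u0) (i,s) (j,s)) = T i j := congrFun (congrFun hH0 i) j
      rw [c1, c2, sub_self]
    rw [e1, ← Finset.mul_sum, e2, mul_zero, add_zero]
  refine ⟨hPSD, hptr, ⟨Dyn.mapOfChoi J, ⟨Dyn.mapOfChoi_CP J hPSD, Dyn.mapOfChoi_TP J hptr⟩,
    Dyn.choi_mapOfChoi J⟩, ?_⟩
  intro M hM
  have hptrM : Dyn.ptraceSnd (Dyn.choi M) = 1 := Dyn.ptraceSnd_choi_of_TP M hM.2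
  have htrM : (Dyn.choi M).trace = (Fintype.card B0 : ℂ) := by
    have h := Dyn.trace_ptraceSnd (Dyn.choi M)
    rw [hptrM, Matrix.trace_one] at h
    exact h.symm
  have htrT : T.trace = (Dyn.choi P).trace := Dyn.trace_ptraceSnd (Dyn.choi P)
  have h1 : (((1 : Matrix B0 B0 ℂ) ⊗ₖ u0) * Dyn.choi M).trace
      = (Fintype.card B1 : ℂ)⁻¹ * (Fintype.card B0 : ℂ) := by
    rw [hu0, Dyn.trace_kron_u_mul 1 (Dyn.choi M) hptrM, Matrix.trace_one]
  have h2 : ((T ⊗ₖ u0) * Dyn.choi M).trace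
      = (Fintype.card B1 : ℂ)⁻¹ * (Dyn.choi P).trace := by
    rw [hu0, Dyn.trace_kron_u_mul T (Dyn.choi M) hptrM, htrT]
  have hJtr : J = (((1 - ε : ℝ) : ℂ)) • ((1 : Matrix B0 B0 ℂ) ⊗ₖ u0)
      + ((ε : ℝ) : ℂ) • (Dyn.choi P + ((1 : Matrix B0 B0 ℂ) - T) ⊗ₖ u0) := rfl
  rw [hJtr, Matrix.add_mul, Matrix.smul_mul, Matrix.smul_mul, Matrix.add_mul,
    Dyn.sub_kron, Matrix.sub_mul, Matrix.trace_add, Matrix.trace_smul, Matrix.trace_smul,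
    Matrix.trace_add, Matrix.trace_sub, h1, h2]
  simp only [smul_eq_mul]
  push_cast
  field_simp
  ring
end

section
/- If Θ is a superchannel from A to B with Choi matrix J^Θ_{AB}, then for every channel N ∈ CPTP(A0→A1) the matrix R^Θ(J^N_A) := tr_A[J^Θ_{AB}((J^N_A)^T ⊗ I_B)] is positive semidefinite and satisfies tr_{B1}[R^Θ(J^N_A)] = I_{B0}; i.e., it is the Choi matrix of a quantum channel on B. -/
open Matrix Kronecker BigOperators
open scoped ComplexOrder

noncomputable section

namespace Dyn

section Aux
variable {A0 A1 B0 B1 : Type*}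

lemma mapTensor_apply [Fintype A0] [DecidableEq A0] [Fintype B0] [DecidableEq B0]
    (N : Matrix A0 A0 ℂ →ₗ[ℂ] Matrix A1 A1 ℂ) (M : Matrix B0 B0 ℂ →ₗ[ℂ] Matrix B1 B1 ℂ)
    (ρ : Matrix (A0 × B0) (A0 × B0) ℂ) (p q : A1 × B1) :
    mapTensor N M ρ p q = ∑ i : A0, ∑ j : A0, ∑ k : B0, ∑ l : B0,
      ρ (i,k) (j,l) * (N (Matrix.single i j 1) p.1 q.1 *
        M (Matrix.single k l 1) p.2 q.2) := by
  show (∑ i : A0, ∑ j : A0, ∑ k : B0, ∑ l : B0,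
      ρ (i, k) (j, l) • (N (Matrix.single i j 1) ⊗ₖ M (Matrix.single k l 1))) p q = _
  simp [Matrix.sum_apply, Matrix.smul_apply, Matrix.kroneckerMap_apply, smul_eq_mul]

lemma mapTensor_id_apply {R : Type*} [Fintype R] [DecidableEq R] [Fintype A0] [DecidableEq A0]
    (N : Matrix A0 A0 ℂ →ₗ[ℂ] Matrix A1 A1 ℂ)
    (ρ : Matrix (R × A0) (R × A0) ℂ) (r s : R) (k l : A1) :
    mapTensor (LinearMap.id (R := ℂ) (M := Matrix R R ℂ)) N ρ (r,k) (s,l)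
      = ∑ a : A0, ∑ b : A0, ρ (r,a) (s,b) * N (Matrix.single a b 1) k l := by
  rw [mapTensor_apply]
  simp only [LinearMap.id_coe, id_eq]
  rw [Finset.sum_eq_single r (fun i _ hi => by simp [Matrix.single, hi]) (by simp)]
  rw [Finset.sum_eq_single s (fun j _ hj => by simp [Matrix.single, hj]) (by simp)]
  simp [Matrix.single_apply_same]

lemma map_decomp [Fintype A0] [DecidableEq A0] [Fintype A1] [DecidableEq A1]
    (N : Matrix A0 A0 ℂ →ₗ[ℂ] Matrix A1 A1 ℂ) :
    N = ∑ a : A0 × A1, ∑ b : A0 × A1, choi N a b • elemMap a.1 b.1 a.2 b.2 := by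
  refine LinearMap.ext fun ρ => ?_
  ext k l
  simp only [LinearMap.sum_apply, LinearMap.smul_apply, Matrix.sum_apply, Matrix.smul_apply,
    elemMap, LinearMap.coe_mk, AddHom.coe_mk, Matrix.smul_apply, smul_eq_mul]
  rw [Fintype.sum_prod_type, Finset.sum_comm]
  rw [Finset.sum_eq_single k ?side1 (by simp)]
  · rw [Finset.sum_congr rfl (fun i _ => by
      rw [Fintype.sum_prod_type, Finset.sum_comm, Finset.sum_eq_single l
        (fun b2 _ hb => by simp [Matrix.single, hb]) (by simp)])]
    simp only [Matrix.single_apply_same, mul_one, choi, Matrix.of_apply]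
    conv_lhs => rw [Matrix.matrix_eq_sum_single ρ]
    rw [map_sum, Matrix.sum_apply]
    refine Finset.sum_congr rfl fun i _ => ?_
    rw [map_sum, Matrix.sum_apply]
    refine Finset.sum_congr rfl fun j _ => ?_
    have h1 : Matrix.single i j (ρ i j) = ρ i j • Matrix.single i j 1 := by
      ext u v
      by_cases h : i = u ∧ j = v <;> simp [Matrix.single, Matrix.smul_apply, h]
    rw [h1, LinearMap.map_smul, Matrix.smul_apply, smul_eq_mul, mul_comm]
  case side1 =>
    intro a2 _ ha
    simp [Matrix.single, ha]

lemma theta_expand [Fintype A0] [DecidableEq A0] [Fintype A1] [DecidableEq A1]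
    (Θ : (Matrix A0 A0 ℂ →ₗ[ℂ] Matrix A1 A1 ℂ) → (Matrix B0 B0 ℂ →ₗ[ℂ] Matrix B1 B1 ℂ))
    (hadd : ∀ (c : ℂ) (N M : Matrix A0 A0 ℂ →ₗ[ℂ] Matrix A1 A1 ℂ),
      Θ (c • N + M) = c • Θ N + Θ M)
    (N : Matrix A0 A0 ℂ →ₗ[ℂ] Matrix A1 A1 ℂ) :
    Θ N = ∑ a : A0 × A1, ∑ b : A0 × A1, choi N a b • Θ (elemMap a.1 b.1 a.2 b.2) := by
  have h0 : Θ 0 = 0 := by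
    have := hadd 1 0 0
    simp only [one_smul, add_zero] at this
    have h2 : Θ 0 + Θ 0 = Θ 0 + 0 := by rw [add_zero]; exact this.symm
    exact (add_left_cancel h2)
  let Θ' : (Matrix A0 A0 ℂ →ₗ[ℂ] Matrix A1 A1 ℂ) →ₗ[ℂ] (Matrix B0 B0 ℂ →ₗ[ℂ] Matrix B1 B1 ℂ) :=
    { toFun := Θ,
      map_add' := fun x y => by simpa using hadd 1 x y,
      map_smul' := fun c x => by simpa [h0] using hadd c x 0 }
  have hΘ' : ∀ M, Θ' M = Θ M := fun _ => rfl
  rw [← hΘ' N]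
  conv_lhs => rw [map_decomp N]
  rw [map_sum]
  refine Finset.sum_congr rfl fun a _ => ?_
  rw [map_sum]
  refine Finset.sum_congr rfl fun b _ => ?_
  rw [LinearMap.map_smul, hΘ']

lemma choi_theta_expand [Fintype A0] [DecidableEq A0] [Fintype A1] [DecidableEq A1]
    [DecidableEq B0]
    (Θ : (Matrix A0 A0 ℂ →ₗ[ℂ] Matrix A1 A1 ℂ) → (Matrix B0 B0 ℂ →ₗ[ℂ] Matrix B1 B1 ℂ))
    (hadd : ∀ (c : ℂ) (N M : Matrix A0 A0 ℂ →ₗ[ℂ] Matrix A1 A1 ℂ),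
      Θ (c • N + M) = c • Θ N + Θ M)
    (N : Matrix A0 A0 ℂ →ₗ[ℂ] Matrix A1 A1 ℂ) (p q : B0 × B1) :
    choi (Θ N) p q = ∑ a : A0 × A1, ∑ b : A0 × A1,
      choi N a b * choi (Θ (elemMap a.1 b.1 a.2 b.2)) p q := by
  rw [theta_expand Θ hadd N]
  simp only [choi, Matrix.of_apply, LinearMap.sum_apply, LinearMap.smul_apply,
    Matrix.sum_apply, Matrix.smul_apply, smul_eq_mul]

lemma linmap_entry_sum {m m' : Type*} [Fintype m] [DecidableEq m]
    (Φ : Matrix m m ℂ →ₗ[ℂ] Matrix m' m' ℂ) (X : Matrix m m ℂ) (r s : m') :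
    Φ X r s = ∑ a : m, ∑ b : m, X a b * Φ (Matrix.single a b 1) r s := by
  conv_lhs => rw [Matrix.matrix_eq_sum_single X]
  rw [map_sum, Matrix.sum_apply]
  refine Finset.sum_congr rfl fun a _ => ?_
  rw [map_sum, Matrix.sum_apply]
  refine Finset.sum_congr rfl fun b _ => ?_
  have h1 : Matrix.single a b (X a b) = X a b • Matrix.single a b 1 := by
    ext u v
    by_cases h : a = u ∧ b = v <;> simp [Matrix.single, Matrix.smul_apply, h]
  rw [h1, LinearMap.map_smul, Matrix.smul_apply, smul_eq_mul]

lemma ptraceSnd_choi [Fintype B0] [DecidableEq B0] [Fintype B1]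
    (M : Matrix B0 B0 ℂ →ₗ[ℂ] Matrix B1 B1 ℂ) (hM : IsTracePreserving M) :
    ptraceSnd (choi M) = 1 := by
  ext i j
  show (∑ s : B1, M (Matrix.single i j 1) s s) = (1 : Matrix B0 B0 ℂ) i j
  have h1 : (∑ s : B1, M (Matrix.single i j 1) s s)
      = (M (Matrix.single i j 1)).trace := rfl
  rw [h1, hM, Matrix.trace, Matrix.one_apply]
  by_cases h : i = j
  · subst h; simp [Matrix.diag, Matrix.single, Finset.sum_ite_eq]
  · rw [if_neg h]
    refine Finset.sum_eq_zero fun s _ => ?_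
    simp only [Matrix.diag, Matrix.single, Matrix.of_apply]
    rw [if_neg]
    rintro ⟨rfl, rfl⟩; exact h rfl

lemma phiPlus_posSemidef (B : Type*) [Fintype B] [DecidableEq B] :
    (phiPlus B).PosSemidef := by
  rw [Matrix.posSemidef_iff_dotProduct_mulVec]
  constructor
  · ext p q
    simp only [Matrix.conjTranspose_apply, phiPlus, Matrix.of_apply]
    by_cases h : q.1 = q.2 ∧ p.1 = p.2 <;> simp [h, and_comm (a := p.1 = p.2)]
  · intro x
    have hmv : ∀ p : B × B, (phiPlus B).mulVec x p
        = if p.1 = p.2 then (∑ i : B, x (i, i)) else 0 := by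
      intro p
      simp only [Matrix.mulVec, dotProduct, phiPlus, Matrix.of_apply, ite_and,
        ite_mul, one_mul, zero_mul, Finset.sum_ite_irrel, Finset.sum_const_zero]
      congr 1
      rw [Fintype.sum_prod_type]
      simp [Finset.sum_ite_eq]
    have key : dotProduct (star x) ((phiPlus B).mulVec x)
        = star (∑ i : B, x (i, i)) * (∑ i : B, x (i, i)) := by
      simp only [dotProduct, Pi.star_apply, hmv, mul_ite, mul_zero]
      rw [Fintype.sum_prod_type]
      simp only [Finset.sum_ite_eq, Finset.mem_univ, if_true]
      rw [← Finset.sum_mul, ← star_sum]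
    rw [key]
    exact star_mul_self_nonneg _

lemma choi_mapTensor_id {R : Type*} [Fintype R] [DecidableEq R]
    [Fintype A0] [DecidableEq A0]
    (N : Matrix A0 A0 ℂ →ₗ[ℂ] Matrix A1 A1 ℂ) (i0 i1 j0 j1 : R) (a0 b0 : A0) (a1 b1 : A1) :
    choi (mapTensor (LinearMap.id (R := ℂ) (M := Matrix R R ℂ)) N)
        ((i0, a0), (i1, a1)) ((j0, b0), (j1, b1))
      = (if i0 = i1 ∧ j0 = j1 then 1 else 0) * choi N (a0, a1) (b0, b1) := by
  show mapTensor (LinearMap.id (R := ℂ) (M := Matrix R R ℂ)) N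
      (Matrix.single (i0, a0) (j0, b0) 1) (i1, a1) (j1, b1) = _
  rw [mapTensor_id_apply]
  simp only [Matrix.single, Matrix.of_apply, Prod.mk.injEq]
  by_cases h : i0 = i1 ∧ j0 = j1
  · simp only [h.1, h.2, true_and, h, if_true, one_mul]
    simp only [ite_and, ite_mul, one_mul, zero_mul, Finset.sum_ite_irrel,
      Finset.sum_const_zero, Finset.sum_ite_eq, Finset.mem_univ, if_true]
    have hE : (Matrix.of fun i' j' => if a0 = i' then if b0 = j' then (1:ℂ) else 0 else 0)
        = Matrix.single a0 b0 1 := by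
      ext u v
      simp [Matrix.single, ite_and]
    show N _ a1 b1 = N (Matrix.single a0 b0 1) a1 b1
    rw [hE]
  · rw [if_neg h, zero_mul]
    rcases not_and_or.mp h with h1 | h1 <;>
      simp [h1, ite_and, Finset.sum_ite_irrel]

lemma mapTensor_elemMap_phi {R : Type*} [Fintype R] [DecidableEq R]
    [Fintype B0] [DecidableEq B0] [DecidableEq B1]
    (e : R ≃ B0) (M2 : Matrix B0 B0 ℂ →ₗ[ℂ] Matrix B1 B1 ℂ)
    (i0 j0 i1 j1 : R) (i j : R) (p1 q1 : B1) :
    mapTensor (elemMap i0 j0 i1 j1) M2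
      ((phiPlus B0).submatrix (fun p : R × B0 => (e p.1, p.2)) (fun p => (e p.1, p.2)))
      (i, p1) (j, q1)
      = (if i1 = i ∧ j1 = j then 1 else 0)
          * M2 (Matrix.single (e i0) (e j0) 1) p1 q1 := by
  rw [mapTensor_apply]
  rw [Finset.sum_eq_single i0
    (fun k _ hk => by simp [elemMap, Matrix.single, hk]) (by simp)]
  rw [Finset.sum_eq_single j0
    (fun l _ hl => by simp [elemMap, Matrix.single, hl]) (by simp)]
  rw [Finset.sum_eq_single (e i0)
    (fun m _ hm => by simp [phiPlus, Ne.symm hm]) (by simp)]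
  rw [Finset.sum_eq_single (e j0)
    (fun n' _ hn => by simp [phiPlus, Ne.symm hn]) (by simp)]
  simp [phiPlus, elemMap, Matrix.single, mul_comm]

lemma mapTensor_id_cp {R' : Type} [Fintype R'] [DecidableEq R']
    [Fintype A0] [DecidableEq A0] [Fintype A1]
    (N : Matrix A0 A0 ℂ →ₗ[ℂ] Matrix A1 A1 ℂ) (hN : IsCompletelyPositive N) :
    IsCompletelyPositive (mapTensor (LinearMap.id (R := ℂ) (M := Matrix R' R' ℂ)) N) := by
  intro R _ _ ρ hρ
  have h2 := hN (R × R')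
    (ρ.submatrix (fun p => (p.1.1, (p.1.2, p.2))) (fun p => (p.1.1, (p.1.2, p.2))))
    (hρ.submatrix _)
  have h3 := h2.submatrix (fun p : R × (R' × A1) => ((p.1, p.2.1), p.2.2))
  have heq : mapTensor (LinearMap.id (R := ℂ) (M := Matrix R R ℂ))
      (mapTensor (LinearMap.id (R := ℂ) (M := Matrix R' R' ℂ)) N) ρ
      = (mapTensor (LinearMap.id (R := ℂ) (M := Matrix (R × R') (R × R') ℂ)) N
          (ρ.submatrix (fun p => (p.1.1, (p.1.2, p.2))) (fun p => (p.1.1, (p.1.2, p.2))))).submatrix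
          (fun p : R × (R' × A1) => ((p.1, p.2.1), p.2.2)) (fun p => ((p.1, p.2.1), p.2.2)) := by
    ext ⟨r, r', k⟩ ⟨s, s', l⟩
    rw [Matrix.submatrix_apply, mapTensor_id_apply, mapTensor_id_apply]
    rw [Fintype.sum_prod_type]
    rw [Finset.sum_eq_single r' ?sideA (by simp)]
    · refine Finset.sum_congr rfl fun a _ => ?_
      rw [Fintype.sum_prod_type]
      rw [Finset.sum_eq_single s' ?sideB (by simp)]
      · refine Finset.sum_congr rfl fun b _ => ?_
        congr 1
        rw [mapTensor_id_apply]
        rw [Finset.sum_eq_single a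
          (fun a0 _ ha => by simp [Matrix.single, Prod.ext_iff, Ne.symm ha])
          (by simp)]
        rw [Finset.sum_eq_single b
          (fun b0 _ hb => by simp [Matrix.single, Prod.ext_iff, Ne.symm hb])
          (by simp)]
        simp [Matrix.single_apply_same]
      case sideB =>
        intro q _ hq
        refine Finset.sum_eq_zero fun b _ => ?_
        rw [mapTensor_id_apply]
        rw [Finset.sum_eq_zero fun a0 _ => Finset.sum_eq_zero fun b0 _ => by
          simp [Matrix.single, Prod.ext_iff, hq], mul_zero]
    case sideA =>
      intro p _ hp
      refine Finset.sum_eq_zero fun a _ => Finset.sum_eq_zero fun b' _ => ?_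
      rw [mapTensor_id_apply]
      rw [Finset.sum_eq_zero fun a0 _ => Finset.sum_eq_zero fun b0 _ => by
        simp [Matrix.single, Prod.ext_iff, hp], mul_zero]
  rw [heq]
  exact h3

lemma idSupertensor_phi_apply {R : Type} [Fintype R] [DecidableEq R]
    [Fintype A0] [DecidableEq A0] [Fintype A1] [DecidableEq A1]
    [Fintype B0] [DecidableEq B0] [Fintype B1] [DecidableEq B1]
    (e : R ≃ B0)
    (Θ : (Matrix A0 A0 ℂ →ₗ[ℂ] Matrix A1 A1 ℂ) → (Matrix B0 B0 ℂ →ₗ[ℂ] Matrix B1 B1 ℂ))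
    (N : Matrix A0 A0 ℂ →ₗ[ℂ] Matrix A1 A1 ℂ) (i j : R) (p1 q1 : B1) :
    idSupertensor R R Θ (mapTensor (LinearMap.id (R := ℂ) (M := Matrix R R ℂ)) N)
      ((phiPlus B0).submatrix (fun p : R × B0 => (e p.1, p.2)) (fun p => (e p.1, p.2)))
      (i, p1) (j, q1)
    = ∑ a : A0 × A1, ∑ b : A0 × A1,
        choi N a b * choi (Θ (elemMap a.1 b.1 a.2 b.2)) (e i, p1) (e j, q1) := by
  simp only [idSupertensor, LinearMap.sum_apply, Matrix.sum_apply, LinearMap.smul_apply,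
    Matrix.smul_apply, smul_eq_mul]
  simp only [choi_mapTensor_id, mapTensor_elemMap_phi]
  simp only [ite_and, ite_mul, mul_ite, one_mul, zero_mul, mul_zero, mul_one,
    Finset.sum_ite_irrel, Finset.sum_const_zero, Finset.sum_ite_eq, Finset.sum_ite_eq',
    Finset.mem_univ, if_true]
  rw [Fintype.sum_prod_type]
  refine Finset.sum_congr rfl fun a0 _ => ?_
  rw [Finset.sum_comm]
  refine Finset.sum_congr rfl fun b0 _ => ?_
  rw [Fintype.sum_prod_type]
  refine Finset.sum_congr rfl fun a1 _ => Finset.sum_congr rfl fun b1 _ => rfl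

end Aux

end Dyn
end

/-- a superchannel maps Choi matrices of channels to Choi matrices of
channels. -/
theorem superchannel_maps_choi {A0 A1 B0 B1 : Type*}
    [Fintype A0] [DecidableEq A0] [Fintype A1] [DecidableEq A1]
    [Fintype B0] [DecidableEq B0] [Fintype B1] [DecidableEq B1]
    (Θ : (Matrix A0 A0 ℂ →ₗ[ℂ] Matrix A1 A1 ℂ) → (Matrix B0 B0 ℂ →ₗ[ℂ] Matrix B1 B1 ℂ))
    (hΘ : Dyn.IsSuperchannel Θ)
    (N : Matrix A0 A0 ℂ →ₗ[ℂ] Matrix A1 A1 ℂ) (hN : Dyn.IsChannel N) :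
    (Dyn.trA (Dyn.superChoi Θ *
        ((Dyn.choi N)ᵀ ⊗ₖ (1 : Matrix (B0 × B1) (B0 × B1) ℂ)))).PosSemidef ∧
    Dyn.ptraceSnd (Dyn.trA (Dyn.superChoi Θ *
        ((Dyn.choi N)ᵀ ⊗ₖ (1 : Matrix (B0 × B1) (B0 × B1) ℂ)))) = 1 := by
  obtain ⟨hadd, htp, hcp⟩ := hΘ
  have hmain : Dyn.trA (Dyn.superChoi Θ *
      ((Dyn.choi N)ᵀ ⊗ₖ (1 : Matrix (B0 × B1) (B0 × B1) ℂ))) = Dyn.choi (Θ N) := by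
    ext p q
    show (∑ a : A0 × A1, (Dyn.superChoi Θ *
      ((Dyn.choi N)ᵀ ⊗ₖ (1 : Matrix (B0 × B1) (B0 × B1) ℂ))) (a, p) (a, q)) = _
    rw [Dyn.choi_theta_expand Θ hadd N p q]
    refine Finset.sum_congr rfl fun a _ => ?_
    rw [Matrix.mul_apply, Fintype.sum_prod_type]
    refine Finset.sum_congr rfl fun c _ => ?_
    rw [Finset.sum_eq_single q
      (fun d _ hd => by simp [Matrix.one_apply, hd]) (by simp)]
    simp only [Matrix.kroneckerMap_apply, Matrix.transpose_apply, Matrix.one_apply_eq, mul_one]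
    rw [mul_comm]
    rfl
  rw [hmain]
  constructor
  · have hN' := Dyn.mapTensor_id_cp (R' := Fin (Fintype.card B0)) N hN.1
    have hΦ := hcp (Fin (Fintype.card B0)) (Fin (Fintype.card B0)) _ hN'
    set e : Fin (Fintype.card B0) ≃ B0 := (Fintype.equivFin B0).symm with he
    have hXpsd : ((Dyn.phiPlus B0).submatrix
        (fun p : Fin (Fintype.card B0) × B0 => (e p.1, p.2))
        (fun p => (e p.1, p.2))).PosSemidef := (Dyn.phiPlus_posSemidef B0).submatrix _
    have hωpsd := hXpsd.submatrix (e := (Prod.snd : Unit × (Fin (Fintype.card B0) × B0) → _))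
    have hY := hΦ Unit _ hωpsd
    have hkey : Dyn.choi (Θ N) =
        ((Dyn.mapTensor (LinearMap.id (R := ℂ) (M := Matrix Unit Unit ℂ))
          (Dyn.idSupertensor (Fin (Fintype.card B0)) (Fin (Fintype.card B0)) Θ
            (Dyn.mapTensor (LinearMap.id (R := ℂ)
              (M := Matrix (Fin (Fintype.card B0)) (Fin (Fintype.card B0)) ℂ)) N)))
          (((Dyn.phiPlus B0).submatrix
            (fun p : Fin (Fintype.card B0) × B0 => (e p.1, p.2))
            (fun p => (e p.1, p.2))).submatrix Prod.snd Prod.snd)).submatrix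
          (fun p : B0 × B1 => ((), (e.symm p.1, p.2)))
          (fun p => ((), (e.symm p.1, p.2))) := by
      ext ⟨p0, p1⟩ ⟨q0, q1⟩
      rw [Matrix.submatrix_apply, Dyn.mapTensor_id_apply]
      have h1 : ∀ a b : Fin (Fintype.card B0) × B0,
          (((Dyn.phiPlus B0).submatrix
            (fun p : Fin (Fintype.card B0) × B0 => (e p.1, p.2))
            (fun p => (e p.1, p.2))).submatrix Prod.snd Prod.snd)
            (((), a) : Unit × _) (((), b) : Unit × _)
          = ((Dyn.phiPlus B0).submatrix
            (fun p : Fin (Fintype.card B0) × B0 => (e p.1, p.2))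
            (fun p => (e p.1, p.2))) a b := fun _ _ => rfl
      simp only [h1]
      rw [← Dyn.linmap_entry_sum]
      rw [Dyn.idSupertensor_phi_apply e Θ N]
      simp only [Equiv.apply_symm_apply]
      exact Dyn.choi_theta_expand Θ hadd N (p0, p1) (q0, q1)
    rw [hkey]
    exact hY.submatrix _
  · exact Dyn.ptraceSnd_choi _ (htp N hN.2)
end
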